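/- arXiv:1802.09798 — 5 statements merged into one kernel-verified Lean document; each statement's English description precedes it below -/
import Mathlib

section
/- Let F be a field of characteristic zero and f = a/b ∈ F(z) with a, b ∈ F[z], gcd(a,b) = 1, and b squarefree. Then f is D_z-integrable in F(z) (i.e., f = D_z(g) for some g ∈ F(z)) if and only if for every irreducible monic factor d of b, the residue of f at d (the numerator of the term with denominator d in the partial fraction decomposition) is zero. -/
open Polynomial

lemma exists_antideriv {F : Type} [Field F] [CharZero F] (p : F[X]) :
    ∃ P : F[X], derivative P = p := by
  induction p using Polynomial.induction_on' with
  | add p q hp hq =>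
    obtain ⟨P, hP⟩ := hp; obtain ⟨Q, hQ⟩ := hq
    exact ⟨P + Q, by simp [hP, hQ]⟩
  | monomial n c =>
    refine ⟨monomial (n+1) (c / (n+1)), ?_⟩
    rw [derivative_monomial]
    simp only [Nat.add_sub_cancel, Nat.cast_add, Nat.cast_one]
    rw [div_mul_cancel₀ _ (Nat.cast_add_one_ne_zero n)]

lemma D_algebraMap_eq {F : Type} [Field F] [CharZero F]
    (D : Derivation F (RatFunc F) (RatFunc F)) (hD : D RatFunc.X = 1) (p : F[X]) :
    D (algebraMap F[X] (RatFunc F) p) = algebraMap F[X] (RatFunc F) (derivative p) := by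
  induction p using Polynomial.induction_on with
  | C c =>
    simp only [RatFunc.algebraMap_C, ← RatFunc.algebraMap_eq_C, Derivation.map_algebraMap, derivative_C, map_zero]
  | add p q hp hq => simp [hp, hq]
  | monomial n c ih =>
    have hX : algebraMap F[X] (RatFunc F) X = RatFunc.X := RatFunc.algebraMap_X
    simp only [map_mul, map_pow, hX, Derivation.leibniz, Derivation.leibniz_pow, hD,
      RatFunc.algebraMap_C, ← RatFunc.algebraMap_eq_C, Derivation.map_algebraMap]
    rw [derivative_C_mul, derivative_X_pow]
    simp only [map_mul, map_pow, hX, Nat.add_sub_cancel, Polynomial.C_eq_natCast,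
      map_natCast, smul_eq_mul, RatFunc.algebraMap_C, ← RatFunc.algebraMap_eq_C]
    push_cast
    ring

open Polynomial

/-- Residue criterion for rational integrability with squarefree denominator:
`f = a/b` with `gcd(a,b)=1` and `b` squarefree is `D_z`-integrable in `F(z)` iff
for each monic irreducible factor `d` of `b`, the residue of `f` at `d` (the unique
`r` with `deg r < deg d` and `r·(b/d) ≡ a (mod d)`) is zero. -/
theorem residue_criterion_squarefree (F : Type) [Field F] [CharZero F]
    (D : Derivation F (RatFunc F) (RatFunc F)) (hD : D RatFunc.X = 1)
    (a b : Polynomial F) (hb : b ≠ 0) (hcop : IsCoprime a b) (hsf : Squarefree b)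
    (f : RatFunc F)
    (hf : f = algebraMap (Polynomial F) (RatFunc F) a /
              algebraMap (Polynomial F) (RatFunc F) b) :
    (∃ g : RatFunc F, f = D g) ↔
      ∀ d : Polynomial F, d.Monic → Irreducible d → d ∣ b →
        ∀ r : Polynomial F, r.degree < d.degree → d ∣ (r * (b / d) - a) → r = 0 := by
  have hbR : (algebraMap F[X] (RatFunc F)) b ≠ 0 := by
    simpa using (RatFunc.algebraMap_ne_zero hb)
  constructor
  · rintro ⟨g, hg⟩ d hdm hdi hdb r hdeg hrd
    exfalso
    set p := g.num with hp
    set q := g.denom with hq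
    have hq0 : q ≠ 0 := g.denom_ne_zero
    have hqR : (algebraMap F[X] (RatFunc F)) q ≠ 0 := by
      simpa using (RatFunc.algebraMap_ne_zero hq0)
    have hgeq : g = algebraMap F[X] (RatFunc F) p / algebraMap F[X] (RatFunc F) q :=
      (RatFunc.num_div_denom g).symm
    have hgq : g * algebraMap F[X] (RatFunc F) q = algebraMap F[X] (RatFunc F) p := by
      rw [hgeq]; field_simp
    have e1 : algebraMap F[X] (RatFunc F) (derivative p)
        = g * algebraMap F[X] (RatFunc F) (derivative q)
          + algebraMap F[X] (RatFunc F) q * D g := by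
      rw [← D_algebraMap_eq D hD p, ← D_algebraMap_eq D hD q, ← hgq, Derivation.leibniz,
        smul_eq_mul, smul_eq_mul]
    have hDg : D g = algebraMap F[X] (RatFunc F) a / algebraMap F[X] (RatFunc F) b := by
      rw [← hg, hf]
    rw [hDg, hgeq] at e1
    have e2 : algebraMap F[X] (RatFunc F) (a * q^2)
        = algebraMap F[X] (RatFunc F) (b * (derivative p * q - p * derivative q)) := by
      field_simp at e1
      simp only [map_mul, map_pow, map_sub]
      linear_combination -e1
    have key : a * q ^ 2 = b * (derivative p * q - p * derivative q) :=
      RatFunc.algebraMap_injective F e2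
    -- polynomial-level argument
    have hdp : Prime d := hdi.prime
    have hda : ¬ d ∣ a := fun hh => hdi.not_isUnit (hcop.isUnit_of_dvd' hh hdb)
    have hdq : d ∣ q := by
      have : d ∣ a * q ^ 2 := key ▸ hdb.mul_right _
      rcases hdp.dvd_mul.mp this with hh | hh
      · exact absurd hh hda
      · exact hdp.dvd_of_dvd_pow hh
    obtain ⟨n, s, hds, hqs⟩ := WfDvdMonoid.max_power_factor hq0 hdi
    obtain ⟨m, rfl⟩ : ∃ m, n = m + 1 := by
      refine Nat.exists_eq_succ_of_ne_zero ?_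
      intro h0
      apply hds
      rw [hqs, h0, pow_zero, one_mul] at hdq
      exact hdq
    obtain ⟨t, hbt⟩ := hdb
    have hdt : ¬ d ∣ t := by
      rintro ⟨e, rfl⟩
      exact hdi.not_isUnit (hsf d ⟨e, by rw [hbt]; ring⟩)
    have hpcop : IsCoprime p q := g.isCoprime_num_denom
    have hdnp : ¬ d ∣ p := fun hh => hdi.not_isUnit (hpcop.isUnit_of_dvd' hh hdq)
    have hd'0 : derivative d ≠ 0 := by
      intro hh
      have h0 := natDegree_eq_zero_of_derivative_eq_zero hh
      exact absurd h0 (Nat.pos_iff_ne_zero.mp hdi.natDegree_pos)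
    have hdd' : ¬ d ∣ derivative d := fun hh =>
      hd'0 (eq_zero_of_dvd_of_degree_lt hh (degree_derivative_lt hdi.ne_zero))
    set M := d * derivative p * s - C ((m:F) + 1) * p * derivative d * s
        - d * p * derivative s with hM
    have hfac : derivative p * q - p * derivative q = d ^ m * M := by
      rw [hqs, hM, derivative_mul, derivative_pow]
      push_cast
      ring
    have hcancel : a * d ^ (m + 1) * s ^ 2 = t * M := by
      refine mul_left_cancel₀ (pow_ne_zero (m+1) hdi.ne_zero) ?_
      rw [hfac, hqs, hbt] at key
      linear_combination key
    have hdtM : d ∣ t * M := by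
      rw [← hcancel]
      exact ((dvd_pow_self d (Nat.succ_ne_zero m)).mul_left a).mul_right (s ^ 2)
    rcases hdp.dvd_mul.mp hdtM with hh | hh
    · exact hdt hh
    · -- d ∣ M ⇒ d ∣ C(m+1) * p * d' * s
      have h3 : d ∣ C ((m:F) + 1) * p * derivative d * s := by
        have : C ((m:F) + 1) * p * derivative d * s
            = d * (derivative p * s - p * derivative s) - M := by rw [hM]; ring
        rw [this]
        exact dvd_sub (Dvd.intro _ rfl) hh
      have hCunit : IsUnit (C ((m:F) + 1)) := by
        refine isUnit_C.mpr (isUnit_iff_ne_zero.mpr ?_)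
        exact Nat.cast_add_one_ne_zero m
      rcases hdp.dvd_mul.mp h3 with h4 | h4
      · rcases hdp.dvd_mul.mp h4 with h5 | h5
        · rcases hdp.dvd_mul.mp h5 with h6 | h6
          · exact hdi.not_isUnit (isUnit_of_dvd_unit h6 hCunit)
          · exact hdnp h6
        · exact hdd' h5
      · exact hds h4
  · intro h
    -- first, b must be a unit
    have hu : IsUnit b := by
      by_contra hu
      obtain ⟨d, hdm, hdi, hdb⟩ := b.exists_monic_irreducible_factor hu
      obtain ⟨t, hbt⟩ := hdb
      have hd0 : d ≠ 0 := hdi.ne_zero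
      have hdt : ¬ d ∣ t := by
        rintro ⟨e, rfl⟩
        exact hdi.not_isUnit (hsf d ⟨e, by rw [hbt]; ring⟩)
      have hcop' : IsCoprime d t := hdi.coprime_iff_not_dvd.mpr hdt
      obtain ⟨u, v, huv⟩ := hcop'
      set r := (v * a) %ₘ d with hr
      have hdeg : r.degree < d.degree := degree_modByMonic_lt _ hdm
      have hsub : r = v * a - d * ((v * a) /ₘ d) := by
        rw [hr, modByMonic_eq_sub_mul_div _ d]
      have hbd : b / d = t := by
        rw [hbt]
        exact mul_div_cancel_left₀ _ hd0
      have hdvd : d ∣ r * (b / d) - a := by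
        rw [hbd, hsub]
        refine ⟨-(a * u + ((v * a) /ₘ d) * t), ?_⟩
        linear_combination (a : F[X]) * huv
      have hr0 : r = 0 := h d hdm hdi ⟨t, hbt⟩ r hdeg hdvd
      rw [hr0, zero_mul, zero_sub] at hdvd
      exact hdi.not_isUnit (hcop.isUnit_of_dvd' (dvd_neg.mp hdvd) ⟨t, hbt⟩)
    obtain ⟨c, hc0, hcb⟩ : ∃ c : F, c ≠ 0 ∧ C c = b := by
      rcases Polynomial.isUnit_iff.mp hu with ⟨c, hcu, hcb⟩
      exact ⟨c, hcu.ne_zero, hcb⟩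
    obtain ⟨P, hP⟩ := exists_antideriv (C c⁻¹ * a)
    refine ⟨algebraMap F[X] (RatFunc F) P, ?_⟩
    rw [D_algebraMap_eq D hD P, hP, hf, ← hcb]
    rw [div_eq_iff (by simpa [← hcb] using hbR)]
    rw [← map_mul]
    congr 1
    rw [mul_comm, ← mul_assoc, ← C_mul, mul_inv_cancel₀ hc0]
    simp
end

section
/- Let K be a field of characteristic zero and let σ_x, σ_y be the shift automorphisms of K(x,y) with σ_x(f)(x,y) = f(x+1,y) and σ_y(f)(x,y) = f(x,y+1). If f ∈ K(x,y) satisfies σ_x^m σ_y^n(f) = f for integers m, n not both zero, then f = g(n̄x - m̄y) for some univariate rational function g ∈ K(z), where n̄ = n/gcd(m,n) and m̄ = m/gcd(m,n). -/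
open Polynomial

-- a polynomial fixed by a nontrivial shift is constant
theorem poly_periodic {A : Type*} [Field A] [CharZero A] (c : A) (hc : c ≠ 0)
    (p : Polynomial A) (h : p.comp (X + C c) = p) :
    ∃ a, p = C a := by
  have heval : ∀ k : ℕ, p.eval ((k : A) * c) = p.eval 0 := by
    intro k; induction k with
    | zero => simp
    | succ k ih =>
      have h2 := congrArg (Polynomial.eval ((k : A) * c)) h
      rw [Polynomial.eval_comp] at h2
      simp only [Polynomial.eval_add, Polynomial.eval_X, Polynomial.eval_C] at h2
      push_cast
      rw [add_mul, one_mul, h2, ih]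
  refine ⟨p.eval 0, ?_⟩
  by_contra hne
  have hq : p - C (p.eval 0) ≠ 0 := sub_ne_zero.mpr hne
  have hinf : {x : A | (p - C (p.eval 0)).IsRoot x}.Infinite := by
    apply Set.infinite_of_injective_forall_mem (f := fun k : ℕ => (k : A) * c)
    · intro i j hij
      simp only at hij
      exact_mod_cast mul_right_cancel₀ hc hij
    · intro k
      simp [Polynomial.IsRoot, heval k]
  exact hq (Polynomial.eq_zero_of_infinite_isRoot _ hinf)

theorem ratfunc_hom_ext {F L : Type*} [Field F] [Field L] {φ ψ : RatFunc F →+* L}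
    (h : ∀ p : Polynomial F, φ (algebraMap _ _ p) = ψ (algebraMap _ _ p)) (f : RatFunc F) :
    φ f = ψ f := by
  rw [← RatFunc.num_div_denom f, map_div₀, map_div₀, h, h]

theorem ratfunc_hom_ext2 {F L : Type*} [Field F] [Field L] {φ ψ : RatFunc F →+* L}
    (hC : ∀ a : F, φ (RatFunc.C a) = ψ (RatFunc.C a)) (hX : φ RatFunc.X = ψ RatFunc.X)
    (f : RatFunc F) : φ f = ψ f := by
  apply ratfunc_hom_ext (h := ?_)
  intro p
  have h2 := Polynomial.ringHom_ext (f := φ.comp (algebraMap (Polynomial F) (RatFunc F)))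
    (g := ψ.comp (algebraMap (Polynomial F) (RatFunc F)))
    (fun a => by simpa [RatFunc.algebraMap_C] using hC a)
    (by simpa [RatFunc.algebraMap_X] using hX)
  exact RingHom.congr_fun h2 p

-- composition with a polynomial having nonzero linear coefficient is nonzero
theorem comp_ne_zero' {F : Type*} [Field F] {q : Polynomial F} (hq : q.coeff 1 ≠ 0)
    {p : Polynomial F} (hp : p ≠ 0) : p.comp q ≠ 0 := by
  intro h
  rcases Polynomial.comp_eq_zero_iff.mp h with h1 | ⟨_, h2⟩
  · exact hp h1
  · apply hq; rw [h2, Polynomial.coeff_C]; simp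

/-- substitution `X ↦ q` as a ring hom on rational functions -/
noncomputable def substR {F : Type*} [Field F] (q : Polynomial F) (hq : q.coeff 1 ≠ 0) :
    RatFunc F →+* RatFunc F :=
  RatFunc.liftRingHom
    ((algebraMap (Polynomial F) (RatFunc F)).comp (Polynomial.eval₂RingHom Polynomial.C q))
    (by
      intro p hp
      rw [mem_nonZeroDivisors_iff_ne_zero] at hp
      rw [Submonoid.mem_comap, mem_nonZeroDivisors_iff_ne_zero]
      simp only [RingHom.coe_comp, Function.comp_apply, Polynomial.coe_eval₂RingHom]
      exact RatFunc.algebraMap_ne_zero (comp_ne_zero' hq hp))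

theorem substR_algebraMap {F : Type*} [Field F] (q : Polynomial F) (hq : q.coeff 1 ≠ 0)
    (p : Polynomial F) :
    substR q hq (algebraMap _ _ p) = algebraMap _ _ (p.comp q) := by
  have := RatFunc.liftRingHom_apply_div
    ((algebraMap (Polynomial F) (RatFunc F)).comp (Polynomial.eval₂RingHom Polynomial.C q))
    (by
      intro p hp
      rw [mem_nonZeroDivisors_iff_ne_zero] at hp
      rw [Submonoid.mem_comap, mem_nonZeroDivisors_iff_ne_zero]
      simp only [RingHom.coe_comp, Function.comp_apply, Polynomial.coe_eval₂RingHom]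
      exact RatFunc.algebraMap_ne_zero (comp_ne_zero' hq hp)) p 1
  simp only [map_one, div_one] at this
  rw [substR, this]
  simp [Polynomial.eval₂_eq_eval_map, Polynomial.comp]

theorem substR_C {F : Type*} [Field F] (q : Polynomial F) (hq : q.coeff 1 ≠ 0) (a : F) :
    substR q hq (RatFunc.C a) = RatFunc.C a := by
  rw [← RatFunc.algebraMap_C (K := F) a, substR_algebraMap]
  simp

theorem substR_X {F : Type*} [Field F] (q : Polynomial F) (hq : q.coeff 1 ≠ 0) :
    substR q hq RatFunc.X = algebraMap _ _ q := by
  rw [← RatFunc.algebraMap_X (K := F), substR_algebraMap]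
  simp

/-- coefficient-wise map as a ring hom on rational functions -/
noncomputable def coeffMap {F : Type*} [Field F] (s : F →+* F) : RatFunc F →+* RatFunc F :=
  RatFunc.liftRingHom ((algebraMap (Polynomial F) (RatFunc F)).comp (Polynomial.mapRingHom s))
    (by
      intro p hp
      rw [mem_nonZeroDivisors_iff_ne_zero] at hp
      rw [Submonoid.mem_comap, mem_nonZeroDivisors_iff_ne_zero]
      simp only [RingHom.coe_comp, Function.comp_apply, Polynomial.coe_mapRingHom]
      exact RatFunc.algebraMap_ne_zero
        ((Polynomial.map_ne_zero_iff s.injective).mpr hp))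

theorem coeffMap_algebraMap {F : Type*} [Field F] (s : F →+* F) (p : Polynomial F) :
    coeffMap s (algebraMap _ _ p) = algebraMap _ _ (p.map s) := by
  have := RatFunc.liftRingHom_apply_div
    ((algebraMap (Polynomial F) (RatFunc F)).comp (Polynomial.mapRingHom s))
    (by
      intro p hp
      rw [mem_nonZeroDivisors_iff_ne_zero] at hp
      rw [Submonoid.mem_comap, mem_nonZeroDivisors_iff_ne_zero]
      simp only [RingHom.coe_comp, Function.comp_apply, Polynomial.coe_mapRingHom]
      exact RatFunc.algebraMap_ne_zero
        ((Polynomial.map_ne_zero_iff s.injective).mpr hp)) p 1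
  simp only [map_one, div_one] at this
  rw [coeffMap, this]
  simp

theorem coeffMap_C {F : Type*} [Field F] (s : F →+* F) (a : F) :
    coeffMap s (RatFunc.C a) = RatFunc.C (s a) := by
  rw [← RatFunc.algebraMap_C (K := F) a, coeffMap_algebraMap]
  simp

theorem coeffMap_X {F : Type*} [Field F] (s : F →+* F) :
    coeffMap s RatFunc.X = RatFunc.X := by
  rw [← RatFunc.algebraMap_X (K := F), coeffMap_algebraMap]
  simp

/-- if `φ` acts on rational functions via a polynomial ring hom that preserves monicity
and nonzero-ness, then the num and denom of a fixed point are fixed. -/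
theorem num_denom_fixed {F : Type*} [Field F] (Ψ : Polynomial F →+* Polynomial F)
    (hmonic : ∀ p : Polynomial F, p.Monic → (Ψ p).Monic)
    (φ : RatFunc F →+* RatFunc F)
    (hφ : ∀ p : Polynomial F, φ (algebraMap _ _ p) = algebraMap _ _ (Ψ p))
    (f : RatFunc F) (hff : φ f = f) : Ψ f.num = f.num ∧ Ψ f.denom = f.denom := by
  have hDm : f.denom.Monic := RatFunc.monic_denom f
  have hDm' : (Ψ f.denom).Monic := hmonic _ hDm
  have hcop : IsCoprime f.num f.denom := RatFunc.isCoprime_num_denom f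
  have hcop' : IsCoprime (Ψ f.num) (Ψ f.denom) := hcop.map Ψ
  have hD0 : f.denom ≠ 0 := RatFunc.denom_ne_zero f
  have hD0' : (Ψ f.denom) ≠ 0 := hDm'.ne_zero
  have hfd : algebraMap _ (RatFunc F) (Ψ f.num) / algebraMap _ _ (Ψ f.denom) =
      algebraMap _ (RatFunc F) f.num / algebraMap _ _ f.denom := by
    rw [← hφ, ← hφ, ← map_div₀ φ, RatFunc.num_div_denom, hff, ← RatFunc.num_div_denom f]
  have hcross : Ψ f.num * f.denom = f.num * Ψ f.denom := by
    have h2 := (div_eq_div_iff (RatFunc.algebraMap_ne_zero hD0')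
      (RatFunc.algebraMap_ne_zero hD0)).mp hfd
    rw [← map_mul, ← map_mul] at h2
    exact RatFunc.algebraMap_injective F h2
  have hDD : Ψ f.denom = f.denom := by
    have h1 : f.denom ∣ Ψ f.denom := by
      refine hcop.symm.dvd_of_dvd_mul_left ?_
      exact ⟨Ψ f.num, by rw [← hcross]; ring⟩
    have h2 : Ψ f.denom ∣ f.denom := by
      refine hcop'.symm.dvd_of_dvd_mul_left ?_
      exact ⟨f.num, by rw [hcross]; ring⟩
    exact Polynomial.eq_of_monic_of_associated hDm' hDm (associated_of_dvd_dvd h2 h1)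
  refine ⟨?_, hDD⟩
  have := hcross
  rw [hDD] at this
  exact mul_right_cancel₀ hD0 this

theorem ratfunc_shift_fixed {A : Type*} [Field A] [CharZero A] (c : A) (hc : c ≠ 0)
    (φ : RatFunc A →+* RatFunc A)
    (hC : ∀ a : A, φ (algebraMap A _ a) = algebraMap A _ a)
    (hX : φ RatFunc.X = RatFunc.X + algebraMap A _ c)
    (f : RatFunc A) (hff : φ f = f) : ∃ a : A, f = algebraMap A _ a := by
  have hpoly : ∀ p : Polynomial A,
      φ (algebraMap _ _ p) = algebraMap _ _ (p.comp (X + C c)) := by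
    have hh : φ.comp (algebraMap (Polynomial A) (RatFunc A)) =
        (algebraMap (Polynomial A) (RatFunc A)).comp (Polynomial.eval₂RingHom C (X + C c)) := by
      apply Polynomial.ringHom_ext
      · intro a
        simp only [RingHom.coe_comp, Function.comp_apply, Polynomial.coe_eval₂RingHom,
          RatFunc.algebraMap_C, Polynomial.eval₂_C]
        exact hC a
      · simp only [RingHom.coe_comp, Function.comp_apply, Polynomial.coe_eval₂RingHom,
          RatFunc.algebraMap_X, Polynomial.eval₂_X]
        rw [hX, map_add, RatFunc.algebraMap_X, RatFunc.algebraMap_C, RatFunc.algebraMap_eq_C]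
    intro p
    have := RingHom.congr_fun hh p
    simpa [Polynomial.eval₂_eq_eval_map, Polynomial.comp] using this
  have hfix := num_denom_fixed (Polynomial.eval₂RingHom C (X + C c))
    (fun p hp => by
      simpa [Polynomial.eval₂_eq_eval_map, Polynomial.comp] using hp.comp_X_add_C c)
    φ (fun p => by
      simpa [Polynomial.eval₂_eq_eval_map, Polynomial.comp] using hpoly p) f hff
  obtain ⟨hN, hD⟩ := hfix
  simp only [Polynomial.coe_eval₂RingHom] at hN hD
  rw [show Polynomial.eval₂ C (X + C c) f.num = f.num.comp (X + C c) from rfl] at hN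
  rw [show Polynomial.eval₂ C (X + C c) f.denom = f.denom.comp (X + C c) from rfl] at hD
  obtain ⟨n0, hn0⟩ := poly_periodic c hc f.num hN
  obtain ⟨d0, hd0⟩ := poly_periodic c hc f.denom hD
  refine ⟨n0 / d0, ?_⟩
  rw [← RatFunc.num_div_denom f, hn0, hd0, RatFunc.algebraMap_C,
    RatFunc.algebraMap_C, ← RatFunc.algebraMap_eq_C, ← map_div₀]

instance ratfunc_charZero (K : Type*) [Field K] [CharZero K] : CharZero (RatFunc K) :=
  charZero_of_injective_algebraMap (algebraMap K (RatFunc K)).injective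

instance ratfunc_tower (K : Type*) [Field K] :
    IsScalarTower K (RatFunc K) (RatFunc (RatFunc K)) := by
  apply IsScalarTower.of_algebraMap_eq
  intro k
  rw [RatFunc.algebraMap_apply, Polynomial.algebraMap_apply, RatFunc.algebraMap_C,
    RatFunc.algebraMap_eq_C]
  simp

set_option maxHeartbeats 2000000 in
/-- Shift invariant rational functions: if `σ_x^m σ_y^n(f) = f` with `m, n` not both zero,
then `f = g(n̄x - m̄y)` for some univariate rational function `g`, where
`n̄ = n/gcd(m,n)`, `m̄ = m/gcd(m,n)`. -/
theorem shift_invariant_structure (K : Type) [Field K] [CharZero K]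
    (x y : RatFunc (RatFunc K))
    (hx : x = algebraMap (RatFunc K) (RatFunc (RatFunc K)) RatFunc.X) (hy : y = RatFunc.X)
    (σx σy : RatFunc (RatFunc K) ≃ₐ[K] RatFunc (RatFunc K))
    (hσx : σx x = x + 1 ∧ σx y = y)
    (hσy : σy x = x ∧ σy y = y + 1)
    (m n : ℤ) (hmn : ¬(m = 0 ∧ n = 0))
    (f : RatFunc (RatFunc K)) (hf : (σx ^ m) ((σy ^ n) f) = f) :
    ∃ g : RatFunc K,
      f = RatFunc.eval (algebraMap K (RatFunc (RatFunc K)))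
        (((n / (Int.gcd m n : ℤ) : ℤ) : RatFunc (RatFunc K)) * x -
         ((m / (Int.gcd m n : ℤ) : ℤ) : RatFunc (RatFunc K)) * y) g := by
  obtain ⟨hσx1, hσx2⟩ := hσx
  obtain ⟨hσy1, hσy2⟩ := hσy
  set d : ℤ := (Int.gcd m n : ℤ) with hdd
  have hd0 : d ≠ 0 := by
    simp only [hdd, ne_eq, Int.natCast_eq_zero]
    rw [Int.gcd_eq_zero_iff]
    exact hmn
  set mb : ℤ := m / d with hmbd
  set nb : ℤ := n / d with hnbd
  have hdm : d * mb = m := Int.mul_ediv_cancel' (Int.gcd_dvd_left m n)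
  have hdn : d * nb = n := Int.mul_ediv_cancel' (Int.gcd_dvd_right m n)
  have key : nb * m = mb * n := by rw [← hdm, ← hdn]; ring
  -- powers of the shifts
  have hxpow : ∀ k : ℤ, (σx ^ k) x = x + (k : RatFunc (RatFunc K)) ∧ (σx ^ k) y = y := by
    intro k
    induction k using Int.induction_on with
    | zero => norm_num
    | succ i ih =>
      rw [zpow_add_one]
      refine ⟨?_, ?_⟩
      · rw [AlgEquiv.mul_apply, hσx1, map_add, ih.1, map_one]; push_cast; ring
      · rw [AlgEquiv.mul_apply, hσx2, ih.2]
    | pred i ih =>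
      rw [zpow_sub_one]
      have hinv1 : σx⁻¹ x = x - 1 := by
        have h3 : σx (x - 1) = x := by rw [map_sub, hσx1, map_one]; ring
        show σx.symm x = x - 1
        rw [AlgEquiv.symm_apply_eq]
        exact h3.symm
      have hinv2 : σx⁻¹ y = y := by
        show σx.symm y = y
        conv_lhs => rw [← hσx2, AlgEquiv.symm_apply_apply]
      refine ⟨?_, ?_⟩
      · rw [AlgEquiv.mul_apply, hinv1, map_sub, ih.1, map_one]; push_cast; ring
      · rw [AlgEquiv.mul_apply, hinv2, ih.2]
  have hypow : ∀ k : ℤ, (σy ^ k) x = x ∧ (σy ^ k) y = y + (k : RatFunc (RatFunc K)) := by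
    intro k
    induction k using Int.induction_on with
    | zero => norm_num
    | succ i ih =>
      rw [zpow_add_one]
      refine ⟨?_, ?_⟩
      · rw [AlgEquiv.mul_apply, hσy1, ih.1]
      · rw [AlgEquiv.mul_apply, hσy2, map_add, ih.2, map_one]; push_cast; ring
    | pred i ih =>
      rw [zpow_sub_one]
      have hinv1 : σy⁻¹ x = x := by
        show σy.symm x = x
        conv_lhs => rw [← hσy1, AlgEquiv.symm_apply_apply]
      have hinv2 : σy⁻¹ y = y - 1 := by
        have h3 : σy (y - 1) = y := by rw [map_sub, hσy2, map_one]; ring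
        show σy.symm y = y - 1
        rw [AlgEquiv.symm_apply_eq]
        exact h3.symm
      refine ⟨?_, ?_⟩
      · rw [AlgEquiv.mul_apply, hinv1, ih.1]
      · rw [AlgEquiv.mul_apply, hinv2, map_sub, ih.2, map_one]; push_cast; ring
  set u : RatFunc (RatFunc K) :=
    (nb : RatFunc (RatFunc K)) * x - (mb : RatFunc (RatFunc K)) * y with hu
  -- the composite shift
  set σT : RatFunc (RatFunc K) ≃ₐ[K] RatFunc (RatFunc K) := (σy ^ n).trans (σx ^ m) with hσTdef
  have hσT : ∀ z, σT z = (σx ^ m) ((σy ^ n) z) := fun _ => rfl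
  have hσTx : σT x = x + (m : RatFunc (RatFunc K)) := by
    rw [hσT, (hypow n).1, (hxpow m).1]
  have hσTy : σT y = y + (n : RatFunc (RatFunc K)) := by
    rw [hσT, (hypow n).2, map_add, (hxpow m).2, map_intCast]
  have hσTf : σT f = f := hf
  have hcast : (nb : RatFunc (RatFunc K)) * (m : RatFunc (RatFunc K)) =
      (mb : RatFunc (RatFunc K)) * (n : RatFunc (RatFunc K)) := by exact_mod_cast key
  have hσTu : σT u = u := by
    rw [hu, map_sub, map_mul, map_mul, map_intCast, map_intCast, hσTx, hσTy]
    linear_combination hcast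
  -- transcendence of u over K
  have htrans : ∀ p : Polynomial K, p ≠ 0 →
      Polynomial.eval₂ (algebraMap K (RatFunc (RatFunc K))) u p ≠ 0 := by
    by_cases hm0 : m = 0
    · -- m = 0 : u = nb • x with nb ≠ 0
      have hmb0 : mb = 0 := by rw [hmbd, hm0, Int.zero_ediv]
      have hnb0 : nb ≠ 0 := by
        intro h0
        exact hmn ⟨hm0, by rw [← hdn, h0, mul_zero]⟩
      have hnbK : ((nb : ℤ) : K) ≠ 0 := Int.cast_ne_zero.mpr hnb0
      have uval : u = algebraMap (RatFunc K) (RatFunc (RatFunc K))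
          ((nb : RatFunc K) * RatFunc.X) := by
        rw [hu, hmb0, map_mul, map_intCast, hx]
        push_cast
        ring
      have hhh : Polynomial.eval₂RingHom (algebraMap K (RatFunc (RatFunc K))) u =
          ((algebraMap (RatFunc K) (RatFunc (RatFunc K))).comp
            ((algebraMap (Polynomial K) (RatFunc K)).comp
              (Polynomial.eval₂RingHom Polynomial.C (Polynomial.C ((nb : ℤ) : K) * X)))) := by
        apply Polynomial.ringHom_ext
        · intro a
          simp only [RingHom.coe_comp, Function.comp_apply, Polynomial.coe_eval₂RingHom,
            Polynomial.eval₂_C, RatFunc.algebraMap_C]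
          rw [← RatFunc.algebraMap_eq_C, ← IsScalarTower.algebraMap_apply]
        · simp only [RingHom.coe_comp, Function.comp_apply, Polynomial.coe_eval₂RingHom,
            Polynomial.eval₂_X, map_mul, RatFunc.algebraMap_C, RatFunc.algebraMap_X]
          rw [← RatFunc.algebraMap_eq_C, map_intCast, uval]
          push_cast
          ring
      intro p hp
      have h1 : p.comp (Polynomial.C ((nb : ℤ) : K) * X) ≠ 0 := by
        apply comp_ne_zero' _ hp
        simp [Polynomial.coeff_C_mul, hnbK]
      have h2 := RingHom.congr_fun hhh p
      simp only [Polynomial.coe_eval₂RingHom, RingHom.coe_comp, Function.comp_apply] at h2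
      rw [h2]
      intro hz
      apply RatFunc.algebraMap_ne_zero h1
      apply (algebraMap (RatFunc K) (RatFunc (RatFunc K))).injective
      rw [map_zero]
      have h4 : Polynomial.eval₂ Polynomial.C (Polynomial.C ((nb : ℤ) : K) * X) p =
          p.comp (Polynomial.C ((nb : ℤ) : K) * X) := rfl
      rw [← h4]
      exact hz
    · -- m ≠ 0
      have hmb0 : mb ≠ 0 := by
        intro h0
        exact hm0 (by rw [← hdm, h0, mul_zero])
      have hmbF : ((mb : ℤ) : RatFunc K) ≠ 0 := Int.cast_ne_zero.mpr hmb0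
      set qB' : Polynomial (RatFunc K) :=
        Polynomial.C ((nb : RatFunc K) * RatFunc.X) - Polynomial.C ((mb : ℤ) : RatFunc K) * X
        with hqB'def
      have hq1 : qB'.coeff 1 = -((mb : ℤ) : RatFunc K) := by
        rw [hqB'def, Polynomial.coeff_sub, Polynomial.coeff_C_mul, Polynomial.coeff_X_one,
          Polynomial.coeff_C]
        norm_num
      have hq1' : qB'.coeff 1 ≠ 0 := by rw [hq1]; exact neg_ne_zero.mpr hmbF
      have hU : algebraMap (Polynomial (RatFunc K)) (RatFunc (RatFunc K)) qB' = u := by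
        rw [hqB'def, map_sub, RatFunc.algebraMap_C,
          map_mul (algebraMap (Polynomial (RatFunc K)) (RatFunc (RatFunc K)))
            (Polynomial.C ((mb : ℤ) : RatFunc K)) Polynomial.X,
          RatFunc.algebraMap_C, RatFunc.algebraMap_X, ← RatFunc.algebraMap_eq_C,
          map_mul (algebraMap (RatFunc K) (RatFunc (RatFunc K))), map_intCast, map_intCast,
          ← hx, ← hy, hu]
      have hhh : Polynomial.eval₂RingHom (algebraMap K (RatFunc (RatFunc K))) u =
          ((algebraMap (Polynomial (RatFunc K)) (RatFunc (RatFunc K))).comp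
            (Polynomial.eval₂RingHom Polynomial.C qB')).comp
              (Polynomial.mapRingHom (algebraMap K (RatFunc K))) := by
        apply Polynomial.ringHom_ext
        · intro a
          simp only [RingHom.coe_comp, Function.comp_apply, Polynomial.coe_eval₂RingHom,
            Polynomial.coe_mapRingHom, Polynomial.map_C, Polynomial.eval₂_C,
            RatFunc.algebraMap_C]
          rw [← RatFunc.algebraMap_eq_C, ← IsScalarTower.algebraMap_apply]
        · simp only [RingHom.coe_comp, Function.comp_apply, Polynomial.coe_eval₂RingHom,
            Polynomial.coe_mapRingHom, Polynomial.map_X, Polynomial.eval₂_X]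
          exact hU.symm
      intro p hp
      have hmap : p.map (algebraMap K (RatFunc K)) ≠ 0 :=
        (Polynomial.map_ne_zero_iff (algebraMap K (RatFunc K)).injective).mpr hp
      have h1 : (p.map (algebraMap K (RatFunc K))).comp qB' ≠ 0 := comp_ne_zero' hq1' hmap
      have h2 := RingHom.congr_fun hhh p
      simp only [Polynomial.coe_eval₂RingHom, RingHom.coe_comp, Function.comp_apply,
        Polynomial.coe_mapRingHom] at h2
      rw [h2]
      have h4 : Polynomial.eval₂ Polynomial.C qB' (p.map (algebraMap K (RatFunc K))) =
          (p.map (algebraMap K (RatFunc K))).comp qB' := rfl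
      rw [h4]
      exact RatFunc.algebraMap_ne_zero h1
  have hule : nonZeroDivisors (Polynomial K) ≤ Submonoid.comap
      (Polynomial.eval₂RingHom (algebraMap K (RatFunc (RatFunc K))) u)
      (nonZeroDivisors (RatFunc (RatFunc K))) := by
    intro p hp
    rw [mem_nonZeroDivisors_iff_ne_zero] at hp
    rw [Submonoid.mem_comap, mem_nonZeroDivisors_iff_ne_zero]
    simpa using htrans p hp
  set Φu : RatFunc K →+* RatFunc (RatFunc K) :=
    RatFunc.liftRingHom (Polynomial.eval₂RingHom (algebraMap K (RatFunc (RatFunc K))) u) hule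
    with hΦudef
  have hΦu_alg : ∀ p : Polynomial K, Φu (algebraMap _ _ p)
      = Polynomial.eval₂ (algebraMap K (RatFunc (RatFunc K))) u p := by
    intro p
    have h5 := RatFunc.liftRingHom_apply_div
      (Polynomial.eval₂RingHom (algebraMap K (RatFunc (RatFunc K))) u) hule p 1
    simp only [map_one, div_one] at h5
    rw [hΦudef]
    simpa using h5
  have hbridge : ∀ g : RatFunc K,
      RatFunc.eval (algebraMap K (RatFunc (RatFunc K))) u g = Φu g := by
    intro g
    rw [hΦudef, RatFunc.liftRingHom_apply]
    simp [RatFunc.eval]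
  have hΦuX : Φu RatFunc.X = u := by
    rw [← RatFunc.algebraMap_X (K := K), hΦu_alg]; simp
  have hΦuC : ∀ k : K, Φu (RatFunc.C k) = algebraMap K (RatFunc (RatFunc K)) k := by
    intro k; rw [← RatFunc.algebraMap_C, hΦu_alg]; simp
  by_cases hm0 : m = 0
  · -- case m = 0 : f lies in the coefficient field
    have hmb0 : mb = 0 := by rw [hmbd, hm0, Int.zero_ediv]
    have hn0 : n ≠ 0 := fun h => hmn ⟨hm0, h⟩
    have hnb0 : nb ≠ 0 := by
      intro h0
      exact hmn ⟨hm0, by rw [← hdn, h0, mul_zero]⟩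
    have hnbK : ((nb : ℤ) : K) ≠ 0 := Int.cast_ne_zero.mpr hnb0
    set φ : RatFunc (RatFunc K) →+* RatFunc (RatFunc K) := σT.toAlgHom.toRingHom with hφdef
    have hφapp : ∀ z, φ z = σT z := fun _ => rfl
    have hCa : ∀ a : RatFunc K,
        φ (algebraMap (RatFunc K) (RatFunc (RatFunc K)) a) =
          algebraMap (RatFunc K) (RatFunc (RatFunc K)) a := by
      apply ratfunc_hom_ext2
        (φ := φ.comp (algebraMap (RatFunc K) (RatFunc (RatFunc K))))
        (ψ := algebraMap (RatFunc K) (RatFunc (RatFunc K)))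
      · intro k
        simp only [RingHom.coe_comp, Function.comp_apply, ← RatFunc.algebraMap_eq_C,
          ← IsScalarTower.algebraMap_apply]
        exact σT.commutes k
      · simp only [RingHom.coe_comp, Function.comp_apply]
        rw [← hx, hφapp, hσTx, hm0]
        push_cast
        ring
    have hXv : φ RatFunc.X = RatFunc.X +
        algebraMap (RatFunc K) (RatFunc (RatFunc K)) ((n : ℤ) : RatFunc K) := by
      rw [hφapp, ← hy, hσTy, map_intCast, hy]
    obtain ⟨c, hc⟩ := ratfunc_shift_fixed ((n : ℤ) : RatFunc K)
      (Int.cast_ne_zero.mpr hn0) φ hCa hXv f hσTf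
    -- build g by rescaling the variable
    have hrc : (Polynomial.C (((nb : ℤ) : K))⁻¹ * (X : Polynomial K)).coeff 1 ≠ 0 := by
      simp [Polynomial.coeff_C_mul, hnbK]
    set ρ : RatFunc K →+* RatFunc K := substR _ hrc with hρdef
    have hcompρ : ∀ z : RatFunc K,
        Φu (ρ z) = algebraMap (RatFunc K) (RatFunc (RatFunc K)) z := by
      apply ratfunc_hom_ext2 (φ := Φu.comp ρ)
        (ψ := algebraMap (RatFunc K) (RatFunc (RatFunc K)))
      · intro k
        simp only [RingHom.coe_comp, Function.comp_apply]
        rw [hρdef, substR_C, hΦuC, ← RatFunc.algebraMap_eq_C,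
          ← IsScalarTower.algebraMap_apply]
      · simp only [RingHom.coe_comp, Function.comp_apply]
        rw [hρdef, substR_X, hΦu_alg]
        simp only [Polynomial.eval₂_mul, Polynomial.eval₂_C, Polynomial.eval₂_X]
        rw [← hx, map_inv₀, map_intCast, hu, hmb0]
        have hnbL : ((nb : ℤ) : RatFunc (RatFunc K)) ≠ 0 := Int.cast_ne_zero.mpr hnb0
        push_cast
        field_simp
        ring
    refine ⟨ρ c, ?_⟩
    rw [hbridge, hcompρ, hc]
  · -- case m ≠ 0
    have hmb0 : mb ≠ 0 := fun h0 => hm0 (by rw [← hdm, h0, mul_zero])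
    have hmbF : ((mb : ℤ) : RatFunc K) ≠ 0 := Int.cast_ne_zero.mpr hmb0
    have hmK : ((m : ℤ) : K) ≠ 0 := Int.cast_ne_zero.mpr hm0
    set qB' : Polynomial (RatFunc K) :=
      Polynomial.C ((nb : RatFunc K) * RatFunc.X) - Polynomial.C ((mb : ℤ) : RatFunc K) * X
      with hqB'def
    have hq1' : qB'.coeff 1 ≠ 0 := by
      rw [hqB'def, Polynomial.coeff_sub, Polynomial.coeff_C_mul, Polynomial.coeff_X_one,
        Polynomial.coeff_C]
      simpa using hmbF
    have hU : algebraMap (Polynomial (RatFunc K)) (RatFunc (RatFunc K)) qB' = u := by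
      rw [hqB'def, map_sub, RatFunc.algebraMap_C,
        map_mul (algebraMap (Polynomial (RatFunc K)) (RatFunc (RatFunc K)))
          (Polynomial.C ((mb : ℤ) : RatFunc K)) Polynomial.X,
        RatFunc.algebraMap_C, RatFunc.algebraMap_X, ← RatFunc.algebraMap_eq_C,
        map_mul (algebraMap (RatFunc K) (RatFunc (RatFunc K))), map_intCast, map_intCast,
        ← hx, ← hy, hu]
    set qB : Polynomial (RatFunc K) :=
      Polynomial.C (((mb : ℤ) : RatFunc K)⁻¹ * ((nb : RatFunc K) * RatFunc.X)) -
        Polynomial.C (((mb : ℤ) : RatFunc K))⁻¹ * X with hqBdef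
    have hq1B : qB.coeff 1 ≠ 0 := by
      rw [hqBdef, Polynomial.coeff_sub, Polynomial.coeff_C_mul, Polynomial.coeff_X_one,
        Polynomial.coeff_C]
      simpa using inv_ne_zero hmbF
    have hcomp1 : qB.comp qB' = X := by
      rw [hqBdef, hqB'def, Polynomial.sub_comp, Polynomial.C_comp, Polynomial.mul_comp,
        Polynomial.C_comp, Polynomial.X_comp]
      have e1 : Polynomial.C (((mb : ℤ) : RatFunc K))⁻¹ *
          (Polynomial.C ((mb : ℤ) : RatFunc K) * (X : Polynomial (RatFunc K))) = X := by
        rw [← mul_assoc, ← Polynomial.C_mul, inv_mul_cancel₀ hmbF, Polynomial.C_1, one_mul]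
      rw [mul_sub, ← Polynomial.C_mul, e1]
      ring
    have hcomp2 : qB'.comp qB = X := by
      rw [hqB'def, hqBdef, Polynomial.sub_comp, Polynomial.C_comp, Polynomial.mul_comp,
        Polynomial.C_comp, Polynomial.X_comp]
      have e2 : Polynomial.C ((mb : ℤ) : RatFunc K) *
          (Polynomial.C (((mb : ℤ) : RatFunc K))⁻¹ * (X : Polynomial (RatFunc K))) = X := by
        rw [← mul_assoc, ← Polynomial.C_mul, mul_inv_cancel₀ hmbF, Polynomial.C_1, one_mul]
      rw [mul_sub, ← Polynomial.C_mul, mul_inv_cancel_left₀ hmbF, e2]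
      ring
    set B : RatFunc (RatFunc K) →+* RatFunc (RatFunc K) := substR qB hq1B with hBdef
    set B' : RatFunc (RatFunc K) →+* RatFunc (RatFunc K) := substR qB' hq1' with hB'def
    have hB'B : ∀ z, B' (B z) = z := by
      intro z
      have := ratfunc_hom_ext2 (φ := B'.comp B) (ψ := RingHom.id (RatFunc (RatFunc K)))
        (fun a => by
          simp only [RingHom.coe_comp, Function.comp_apply, RingHom.id_apply]
          rw [hBdef, hB'def, substR_C, substR_C])
        (by
          simp only [RingHom.coe_comp, Function.comp_apply, RingHom.id_apply]
          rw [hBdef, hB'def, substR_X, substR_algebraMap, hcomp1, RatFunc.algebraMap_X]) z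
      simpa using this
    have hBB' : ∀ z, B (B' z) = z := by
      intro z
      have := ratfunc_hom_ext2 (φ := B.comp B') (ψ := RingHom.id (RatFunc (RatFunc K)))
        (fun a => by
          simp only [RingHom.coe_comp, Function.comp_apply, RingHom.id_apply]
          rw [hBdef, hB'def, substR_C, substR_C])
        (by
          simp only [RingHom.coe_comp, Function.comp_apply, RingHom.id_apply]
          rw [hBdef, hB'def, substR_X, substR_algebraMap, hcomp2, RatFunc.algebraMap_X]) z
      simpa using this
    -- the coefficient shift at the inner level
    have hs1 : ((X : Polynomial K) + Polynomial.C ((m : ℤ) : K)).coeff 1 ≠ 0 := by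
      rw [Polynomial.coeff_add, Polynomial.coeff_X_one, Polynomial.coeff_C]
      norm_num
    set s : RatFunc K →+* RatFunc K := substR _ hs1 with hsdef
    have hsC : ∀ k : K, s (algebraMap K (RatFunc K) k) = algebraMap K (RatFunc K) k := by
      intro k
      rw [RatFunc.algebraMap_eq_C, hsdef, substR_C]
    have hsX : s RatFunc.X = RatFunc.X + algebraMap K (RatFunc K) ((m : ℤ) : K) := by
      rw [hsdef, substR_X, map_add, RatFunc.algebraMap_X, RatFunc.algebraMap_C,
        RatFunc.algebraMap_eq_C]
    set S : RatFunc (RatFunc K) →+* RatFunc (RatFunc K) := coeffMap s with hSdef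
    set σTr : RatFunc (RatFunc K) →+* RatFunc (RatFunc K) := σT.toAlgHom.toRingHom with hσTrdef
    have hσTrapp : ∀ z, σTr z = σT z := fun _ => rfl
    have hσTι : ∀ a : RatFunc K,
        σT (algebraMap (RatFunc K) (RatFunc (RatFunc K)) a) =
          algebraMap (RatFunc K) (RatFunc (RatFunc K)) (s a) := by
      intro a
      have := ratfunc_hom_ext2
        (φ := σTr.comp (algebraMap (RatFunc K) (RatFunc (RatFunc K))))
        (ψ := (algebraMap (RatFunc K) (RatFunc (RatFunc K))).comp s)
        (fun k => by
          simp only [RingHom.coe_comp, Function.comp_apply]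
          rw [hsdef, substR_C, ← RatFunc.algebraMap_eq_C, ← IsScalarTower.algebraMap_apply,
            hσTrapp]
          exact σT.commutes k)
        (by
          simp only [RingHom.coe_comp, Function.comp_apply]
          rw [hσTrapp, ← hx, hσTx, hsdef, substR_X, map_add, RatFunc.algebraMap_X,
            RatFunc.algebraMap_C, ← RatFunc.algebraMap_eq_C, map_add, ← hx,
            ← IsScalarTower.algebraMap_apply, map_intCast]) a
      simpa [hσTrapp] using this
    -- conjugating the shift by the change of variables gives the coefficient shift
    have hτ : ∀ z, B (σT (B' z)) = S z := by
      intro z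
      have := ratfunc_hom_ext2
        (φ := (B.comp σTr).comp B') (ψ := S)
        (fun a => by
          simp only [RingHom.coe_comp, Function.comp_apply]
          rw [hB'def, substR_C, ← RatFunc.algebraMap_eq_C, hσTrapp, hσTι,
            RatFunc.algebraMap_eq_C, hBdef, substR_C, hSdef, coeffMap_C])
        (by
          simp only [RingHom.coe_comp, Function.comp_apply]
          rw [hB'def, substR_X, hU, hσTrapp, hσTu, ← hU, hBdef, substR_algebraMap, hcomp2,
            RatFunc.algebraMap_X, hSdef, coeffMap_X]) z
      simpa [hσTrapp] using this
    have hSh : S (B f) = B f := by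
      have h6 := hτ (B f)
      rw [hB'B, hσTf] at h6
      exact h6.symm
    -- the num and denom of B f have coefficients fixed by the shift s
    obtain ⟨hNfix, hDfix⟩ := num_denom_fixed (Polynomial.mapRingHom s)
      (fun p hp => by simpa using hp.map s)
      S (fun p => by simpa using coeffMap_algebraMap s p) (B f) hSh
    simp only [Polynomial.coe_mapRingHom] at hNfix hDfix
    have hcoeffN : ∀ i : ℕ, (B f).num.coeff i ∈ Set.range (algebraMap K (RatFunc K)) := by
      intro i
      have h7 : s ((B f).num.coeff i) = (B f).num.coeff i := by
        conv_rhs => rw [← hNfix]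
        rw [Polynomial.coeff_map]
      obtain ⟨a, ha⟩ := ratfunc_shift_fixed ((m : ℤ) : K) hmK s hsC hsX _ h7
      exact ⟨a, ha.symm⟩
    have hcoeffD : ∀ i : ℕ, (B f).denom.coeff i ∈ Set.range (algebraMap K (RatFunc K)) := by
      intro i
      have h7 : s ((B f).denom.coeff i) = (B f).denom.coeff i := by
        conv_rhs => rw [← hDfix]
        rw [Polynomial.coeff_map]
      obtain ⟨a, ha⟩ := ratfunc_shift_fixed ((m : ℤ) : K) hmK s hsC hsX _ h7
      exact ⟨a, ha.symm⟩
    obtain ⟨N₀, hN₀⟩ := (Polynomial.mem_lifts _).mp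
      ((Polynomial.lifts_iff_coeff_lifts _).mpr hcoeffN)
    obtain ⟨D₀, hD₀⟩ := (Polynomial.mem_lifts _).mp
      ((Polynomial.lifts_iff_coeff_lifts _).mpr hcoeffD)
    -- key computation relating B' and Φu
    have hgen : ∀ p₀ : Polynomial K,
        B' (algebraMap (Polynomial (RatFunc K)) (RatFunc (RatFunc K))
          (p₀.map (algebraMap K (RatFunc K)))) =
          Φu (algebraMap (Polynomial K) (RatFunc K) p₀) := by
      intro p₀
      have hhh2 : (B'.comp (algebraMap (Polynomial (RatFunc K))
            (RatFunc (RatFunc K)))).comp (Polynomial.mapRingHom (algebraMap K (RatFunc K))) =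
          Φu.comp (algebraMap (Polynomial K) (RatFunc K)) := by
        apply Polynomial.ringHom_ext
        · intro k
          simp only [RingHom.coe_comp, Function.comp_apply, Polynomial.coe_mapRingHom,
            Polynomial.map_C, RatFunc.algebraMap_C]
          rw [hB'def, substR_C, hΦuC, ← RatFunc.algebraMap_eq_C,
            ← IsScalarTower.algebraMap_apply]
        · simp only [RingHom.coe_comp, Function.comp_apply, Polynomial.coe_mapRingHom,
            Polynomial.map_X, RatFunc.algebraMap_X]
          rw [hB'def, ← RatFunc.algebraMap_X (K := RatFunc K), substR_algebraMap,
            Polynomial.X_comp, hU, hΦuX]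
      exact RingHom.congr_fun hhh2 p₀
    refine ⟨algebraMap (Polynomial K) (RatFunc K) N₀ / algebraMap (Polynomial K) (RatFunc K) D₀,
      ?_⟩
    rw [hbridge, map_div₀]
    have hfB : f = B' (B f) := (hB'B f).symm
    rw [hfB]
    conv_lhs => rw [← RatFunc.num_div_denom (B f)]
    rw [map_div₀, ← hN₀, ← hD₀, hgen, hgen]
end

section
/- Let K be a field of characteristic zero, q ∈ K not a root of unity, σ_x the shift x ↦ x+1 and τ_y the q-shift y ↦ qy on K(x,y). Suppose f ∈ K(x,y) satisfies σ_x^m τ_y^n(f) = f for integers m, n not both zero. Then: if m = 0 then f ∈ K(x); if n = 0 then f ∈ K(y); and if mn ≠ 0 then f ∈ K. -/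
open Polynomial

namespace MixedInv

variable {K : Type} [Field K]

theorem ratfunc_algHom_ext {L : Type} [Field L] [Algebra K L]
    {g₁ g₂ : RatFunc K →ₐ[K] L}
    (h : g₁ RatFunc.X = g₂ RatFunc.X) : g₁ = g₂ := by
  have key : ∀ p : K[X], g₁ (algebraMap K[X] (RatFunc K) p)
      = g₂ (algebraMap K[X] (RatFunc K) p) := by
    intro p
    have h2 : g₁.comp (IsScalarTower.toAlgHom K K[X] (RatFunc K))
        = g₂.comp (IsScalarTower.toAlgHom K K[X] (RatFunc K)) := by
      apply Polynomial.algHom_ext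
      simpa [RatFunc.algebraMap_X] using h
    exact AlgHom.congr_fun h2 p
  apply AlgHom.ext; intro f
  refine RatFunc.induction_on (P := fun f => g₁ f = g₂ f) f ?_
  intro p q hq
  rw [map_div₀, map_div₀, key, key]

theorem aeval_shift (r : K) (p : K[X]) :
    Polynomial.aeval (RatFunc.X + RatFunc.C r) p
      = algebraMap K[X] (RatFunc K) (taylor r p) := by
  have h1 : (RatFunc.X + RatFunc.C r : RatFunc K)
      = algebraMap K[X] (RatFunc K) (X + C r) := by
    rw [map_add, RatFunc.algebraMap_X, RatFunc.algebraMap_C]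
  rw [h1, Polynomial.aeval_algebraMap_apply, taylor_apply, comp_eq_aeval]

noncomputable def shiftHom (r : K) : RatFunc K →ₐ[K] RatFunc K :=
  RatFunc.liftAlgHom (Polynomial.aeval (RatFunc.X + RatFunc.C r)) <| by
    refine nonZeroDivisors_le_comap_nonZeroDivisors_of_injective _ ?_
    intro p q hpq
    simp only [aeval_shift] at hpq
    exact taylor_injective r (RatFunc.algebraMap_injective K hpq)

theorem shiftHom_X_aux (r : K) : True := trivial

theorem shiftHom_poly (r : K) (p : K[X]) :
    shiftHom r (algebraMap K[X] (RatFunc K) p) = algebraMap K[X] (RatFunc K) (taylor r p) := by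
  have := RatFunc.liftAlgHom_apply_div (φ := Polynomial.aeval (RatFunc.X + RatFunc.C r))
    (hφ := by
      refine nonZeroDivisors_le_comap_nonZeroDivisors_of_injective _ ?_
      intro a b hab
      simp only [aeval_shift] at hab
      exact taylor_injective r (RatFunc.algebraMap_injective K hab)) p 1
  simp only [map_one, div_one] at this
  rw [shiftHom, this, aeval_shift]


theorem taylor_ne_zero {r : K} {p : K[X]} (hp : p ≠ 0) : taylor r p ≠ 0 := by
  intro h
  exact hp (taylor_injective r (by simpa using h))

theorem leadingCoeff_taylor (r : K) (p : K[X]) :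
    (taylor r p).leadingCoeff = p.leadingCoeff := by
  rcases eq_or_ne p 0 with h | h
  · simp [h]
  rw [taylor_apply, leadingCoeff_comp (by simp [natDegree_X_add_C]),
    leadingCoeff_X_add_C, one_pow, mul_one]

theorem shiftHom_X (r : K) : shiftHom r RatFunc.X = RatFunc.X + RatFunc.C r := by
  rw [← RatFunc.algebraMap_X, shiftHom_poly, taylor_X, map_add, RatFunc.algebraMap_X,
    RatFunc.algebraMap_C]

/-- Cross-multiplied equation from `shiftHom r a = C c * a`. -/
theorem cross_eq {r : K} {a : RatFunc K} {c : K}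
    (h : shiftHom r a = RatFunc.C c * a) :
    taylor r a.num * a.denom = Polynomial.C c * (a.num * taylor r a.denom) := by
  have hrepr : a = algebraMap K[X] (RatFunc K) a.num / algebraMap K[X] (RatFunc K) a.denom :=
    (RatFunc.num_div_denom a).symm
  have hd0 : algebraMap K[X] (RatFunc K) a.denom ≠ 0 :=
    RatFunc.algebraMap_ne_zero a.denom_ne_zero
  have hd0' : algebraMap K[X] (RatFunc K) (taylor r a.denom) ≠ 0 :=
    RatFunc.algebraMap_ne_zero (taylor_ne_zero a.denom_ne_zero)
  rw [hrepr, map_div₀, shiftHom_poly, shiftHom_poly] at h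
  have h2 : algebraMap K[X] (RatFunc K) (taylor r a.num) * algebraMap K[X] (RatFunc K) a.denom
      = RatFunc.C c * algebraMap K[X] (RatFunc K) a.num
        * algebraMap K[X] (RatFunc K) (taylor r a.denom) := by
    rw [mul_div_assoc', div_eq_div_iff hd0' hd0] at h
    linear_combination h
  apply RatFunc.algebraMap_injective K
  rw [map_mul, map_mul, map_mul, RatFunc.algebraMap_C]
  linear_combination h2

/-- If `a ≠ 0` and the shift of `a` is a `K`-multiple of `a`, then the multiplier is `1`. -/
theorem shift_eq_smul {r : K} {a : RatFunc K} {c : K} (ha : a ≠ 0)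
    (h : shiftHom r a = RatFunc.C c * a) : c = 1 := by
  have h2 := cross_eq h
  have hn0 : a.num ≠ 0 := RatFunc.num_ne_zero ha
  have hd0 : a.denom ≠ 0 := a.denom_ne_zero
  have h3 := congrArg Polynomial.leadingCoeff h2
  rw [leadingCoeff_mul, leadingCoeff_mul, leadingCoeff_mul, leadingCoeff_taylor,
    leadingCoeff_taylor, leadingCoeff_C] at h3
  have hlc : a.num.leadingCoeff * a.denom.leadingCoeff ≠ 0 :=
    mul_ne_zero (leadingCoeff_ne_zero.2 hn0) (leadingCoeff_ne_zero.2 hd0)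
  have h4 : (1 - c) * (a.num.leadingCoeff * a.denom.leadingCoeff) = 0 := by
    linear_combination h3
  rcases mul_eq_zero.mp h4 with h5 | h5
  · exact (sub_eq_zero.mp h5).symm
  · exact absurd h5 hlc


variable [CharZero K]

theorem poly_shift_fixed {r : K} (hr : r ≠ 0) {p : K[X]} (h : taylor r p = p) :
    ∃ c : K, p = Polynomial.C c := by
  have heval : ∀ s : K, p.eval (s + r) = p.eval s := by
    intro s
    conv_rhs => rw [← h]
    rw [taylor_eval]
  have hk : ∀ k : ℕ, p.eval ((k : K) * r) = p.eval 0 := by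
    intro k
    induction k with
    | zero => simp
    | succ k ih =>
        have : ((k + 1 : ℕ) : K) * r = (k : K) * r + r := by push_cast; ring
        rw [this, heval, ih]
  have hroots : (p - Polynomial.C (p.eval 0)) = 0 := by
    apply Polynomial.eq_zero_of_infinite_isRoot
    refine Set.infinite_of_injective_forall_mem (f := fun k : ℕ => (k : K) * r) ?_ ?_
    · intro k₁ k₂ hkk
      exact Nat.cast_injective (mul_right_cancel₀ hr hkk)
    · intro k
      simp only [Set.mem_setOf_eq, Polynomial.IsRoot, Polynomial.eval_sub, Polynomial.eval_C,
        hk k, sub_self]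
  exact ⟨p.eval 0, by linear_combination hroots⟩

/-- A rational function fixed by a nontrivial shift is constant. -/
theorem shift_fixed {r : K} (hr : r ≠ 0) {a : RatFunc K}
    (h : shiftHom r a = a) : ∃ c : K, a = RatFunc.C c := by
  rcases eq_or_ne a 0 with rfl | ha
  · exact ⟨0, by simp⟩
  have h2 : taylor r a.num * a.denom = a.num * taylor r a.denom := by
    have := cross_eq (c := 1) (r := r) (a := a) (by rwa [map_one, one_mul])
    rwa [map_one, one_mul] at this
  have hn0 : a.num ≠ 0 := RatFunc.num_ne_zero ha
  have hd0 : a.denom ≠ 0 := a.denom_ne_zero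
  have hcop : IsCoprime a.num a.denom := a.isCoprime_num_denom
  -- a.num divides its taylor shift
  have hdvd : a.num ∣ taylor r a.num :=
    hcop.dvd_of_dvd_mul_right ⟨taylor r a.denom, h2⟩
  obtain ⟨u, hu⟩ := hdvd
  have hu0 : u ≠ 0 := by
    intro h0
    exact taylor_ne_zero hn0 (by rw [hu, h0, mul_zero])
  have hdeg : u.natDegree = 0 := by
    have := natDegree_taylor a.num r
    rw [hu, natDegree_mul hn0 hu0] at this
    omega
  have hu1 : u = 1 := by
    have hlc := congrArg Polynomial.leadingCoeff hu
    rw [leadingCoeff_taylor, leadingCoeff_mul] at hlc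
    have h5 : u.leadingCoeff = 1 :=
      mul_left_cancel₀ (leadingCoeff_ne_zero.2 hn0) (by rw [mul_one]; exact hlc.symm)
    have h6 : u.coeff 0 = u.leadingCoeff := by rw [Polynomial.leadingCoeff, hdeg]
    rw [Polynomial.eq_C_of_natDegree_eq_zero hdeg, h6, h5, map_one]
  rw [hu1, mul_one] at hu
  obtain ⟨cn, hcn⟩ := poly_shift_fixed hr hu
  -- same for denominator
  have hdvd' : a.denom ∣ taylor r a.denom :=
    hcop.symm.dvd_of_dvd_mul_right ⟨taylor r a.num, by linear_combination -h2⟩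
  obtain ⟨w, hw⟩ := hdvd'
  have hw0 : w ≠ 0 := by
    intro h0
    exact taylor_ne_zero hd0 (by rw [hw, h0, mul_zero])
  have hwdeg : w.natDegree = 0 := by
    have := natDegree_taylor a.denom r
    rw [hw, natDegree_mul hd0 hw0] at this
    omega
  have hw1 : w = 1 := by
    have hlc := congrArg Polynomial.leadingCoeff hw
    rw [leadingCoeff_taylor, leadingCoeff_mul] at hlc
    have h5 : w.leadingCoeff = 1 :=
      mul_left_cancel₀ (leadingCoeff_ne_zero.2 hd0) (by rw [mul_one]; exact hlc.symm)
    have h6 : w.coeff 0 = w.leadingCoeff := by rw [Polynomial.leadingCoeff, hwdeg]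
    rw [Polynomial.eq_C_of_natDegree_eq_zero hwdeg, h6, h5, map_one]
  rw [hw1, mul_one] at hw
  obtain ⟨cd, hcd⟩ := poly_shift_fixed hr hw
  refine ⟨cn / cd, ?_⟩
  have hrepr : a = algebraMap K[X] (RatFunc K) a.num / algebraMap K[X] (RatFunc K) a.denom :=
    (RatFunc.num_div_denom a).symm
  rw [hrepr, hcn, hcd, RatFunc.algebraMap_C, RatFunc.algebraMap_C, ← map_div₀]


section Tower

theorem algMap_tower (a : K) :
    algebraMap (RatFunc K) (RatFunc (RatFunc K)) (algebraMap K (RatFunc K) a)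
      = algebraMap K (RatFunc (RatFunc K)) a := by
  rw [IsScalarTower.algebraMap_apply K (Polynomial (RatFunc K)) (RatFunc (RatFunc K)),
    IsScalarTower.algebraMap_apply K (RatFunc K) (Polynomial (RatFunc K)),
    IsScalarTower.algebraMap_apply (RatFunc K) (Polynomial (RatFunc K)) (RatFunc (RatFunc K))]

/-- The embedding `K(x) → K(x)(y)` as a `K`-algebra hom. -/
noncomputable def ι : RatFunc K →ₐ[K] RatFunc (RatFunc K) :=
  { algebraMap (RatFunc K) (RatFunc (RatFunc K)) with commutes' := algMap_tower }

theorem ι_apply (a : RatFunc K) : ι a = algebraMap (RatFunc K) (RatFunc (RatFunc K)) a := rfl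

theorem mem_adjoinX (a : RatFunc K) :
    algebraMap (RatFunc K) (RatFunc (RatFunc K)) a ∈
      IntermediateField.adjoin K
        {algebraMap (RatFunc K) (RatFunc (RatFunc K)) RatFunc.X} := by
  set A := IntermediateField.adjoin K
    {algebraMap (RatFunc K) (RatFunc (RatFunc K)) RatFunc.X} with hA
  have hXmem : algebraMap (RatFunc K) (RatFunc (RatFunc K)) RatFunc.X ∈ A :=
    IntermediateField.subset_adjoin K _ rfl
  have key : ∀ p : K[X],
      algebraMap (RatFunc K) (RatFunc (RatFunc K)) (algebraMap K[X] (RatFunc K) p) ∈ A := by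
    intro p
    induction p using Polynomial.induction_on' with
    | add f g hf hg => rw [map_add, map_add]; exact add_mem hf hg
    | monomial i k =>
        rw [← Polynomial.C_mul_X_pow_eq_monomial, map_mul, map_pow, map_mul, map_pow,
          RatFunc.algebraMap_C, RatFunc.algebraMap_X, ← RatFunc.algebraMap_eq_C, algMap_tower]
        exact mul_mem (A.algebraMap_mem k) (pow_mem hXmem i)
  rw [← RatFunc.num_div_denom a, map_div₀]
  exact div_mem (key a.num) (key a.denom)

theorem mem_adjoinY (P : Polynomial (RatFunc K))
    (h : ∀ i, ∃ k : K, P.coeff i = algebraMap K (RatFunc K) k) :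
    algebraMap (Polynomial (RatFunc K)) (RatFunc (RatFunc K)) P ∈
      IntermediateField.adjoin K {(RatFunc.X : RatFunc (RatFunc K))} := by
  set A := IntermediateField.adjoin K {(RatFunc.X : RatFunc (RatFunc K))} with hA
  have hXmem : (RatFunc.X : RatFunc (RatFunc K)) ∈ A :=
    IntermediateField.subset_adjoin K _ rfl
  rw [P.as_sum_support, map_sum]
  refine sum_mem ?_
  intro i hi
  obtain ⟨k, hk⟩ := h i
  have hterm : algebraMap (Polynomial (RatFunc K)) (RatFunc (RatFunc K))
      (Polynomial.monomial i (P.coeff i))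
      = algebraMap K (RatFunc (RatFunc K)) k * RatFunc.X ^ i := by
    rw [← Polynomial.C_mul_X_pow_eq_monomial, map_mul, map_pow,
      RatFunc.algebraMap_C, RatFunc.algebraMap_X, hk, ← RatFunc.algebraMap_eq_C, algMap_tower]
  rw [hterm]
  exact mul_mem (A.algebraMap_mem k) (pow_mem hXmem i)

end Tower

section Pow

variable {E : Type} [Field E] [Algebra K E] (ψ : E ≃ₐ[K] E) {a : E}

theorem pow_fix (h : ψ a = a) (k : ℤ) : (ψ ^ k) a = a := by
  have happ : ψ (ψ⁻¹ a) = a := ψ.apply_symm_apply a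
  have hinv : (ψ⁻¹ : E ≃ₐ[K] E) a = a := by
    apply ψ.injective; rw [happ, h]
  have hnat : ∀ (χ : E ≃ₐ[K] E), χ a = a → ∀ j : ℕ, (χ ^ j) a = a := by
    intro χ hχ j
    induction j with
    | zero => simp
    | succ j ih => rw [pow_succ, AlgEquiv.mul_apply, hχ, ih]
  rcases k with k | k
  · rw [Int.ofNat_eq_coe, zpow_natCast]; exact hnat ψ h k
  · rw [zpow_negSucc, ← inv_pow]; exact hnat ψ⁻¹ hinv (k + 1)

theorem pow_shift (h : ψ a = a + 1) (k : ℤ) : (ψ ^ k) a = a + k := by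
  have happ : ψ (ψ⁻¹ a) = a := ψ.apply_symm_apply a
  have hinv : (ψ⁻¹ : E ≃ₐ[K] E) a = a - 1 := by
    apply ψ.injective
    rw [happ, map_sub, map_one, h]; ring
  have hnat : ∀ j : ℕ, (ψ ^ j) a = a + j := by
    intro j
    induction j with
    | zero => simp
    | succ j ih =>
        rw [pow_succ, AlgEquiv.mul_apply, h, map_add, map_one, ih]
        push_cast; ring
  have hinvnat : ∀ j : ℕ, ((ψ⁻¹ : E ≃ₐ[K] E) ^ j) a = a - j := by
    intro j
    induction j with
    | zero => simp
    | succ j ih =>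
        rw [pow_succ, AlgEquiv.mul_apply, hinv, map_sub, map_one, ih]
        push_cast; ring
  rcases k with k | k
  · rw [Int.ofNat_eq_coe, zpow_natCast, hnat]; push_cast; ring
  · rw [zpow_negSucc, ← inv_pow, hinvnat, Int.cast_negSucc]; push_cast; ring

theorem pow_scale {c : K} (hc : c ≠ 0) (h : ψ a = algebraMap K E c * a) (k : ℤ) :
    (ψ ^ k) a = algebraMap K E (c ^ k) * a := by
  have hc' : algebraMap K E c ≠ 0 := fun h0 =>
    hc ((algebraMap K E).injective (by rw [h0, map_zero]))
  have happ : ψ (ψ⁻¹ a) = a := ψ.apply_symm_apply a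
  have hinv : (ψ⁻¹ : E ≃ₐ[K] E) a = (algebraMap K E c)⁻¹ * a := by
    apply ψ.injective
    rw [happ, map_mul, map_inv₀, AlgEquiv.commutes, h, ← mul_assoc,
      inv_mul_cancel₀ hc', one_mul]
  have hnat : ∀ j : ℕ, (ψ ^ j) a = algebraMap K E (c ^ j) * a := by
    intro j
    induction j with
    | zero => simp
    | succ j ih =>
        rw [pow_succ, AlgEquiv.mul_apply, h, map_mul, AlgEquiv.commutes, ih,
          pow_succ, map_mul]
        ring
  have hinvnat : ∀ j : ℕ, ((ψ⁻¹ : E ≃ₐ[K] E) ^ j) a = (algebraMap K E (c ^ j))⁻¹ * a := by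
    intro j
    induction j with
    | zero => simp
    | succ j ih =>
        rw [pow_succ, AlgEquiv.mul_apply, hinv, map_mul, map_inv₀, AlgEquiv.commutes, ih,
          pow_succ, map_mul, mul_inv]
        ring
  rcases k with k | k
  · rw [Int.ofNat_eq_coe, zpow_natCast, zpow_natCast, hnat]
  · rw [zpow_negSucc, ← inv_pow, hinvnat, zpow_negSucc, map_inv₀, map_pow]

end Pow


section Phi

variable (S : RatFunc K →ₐ[K] RatFunc K) (cF : RatFunc K)

/-- Coefficientwise twist of a polynomial: apply `S` to each coefficient and
multiply coefficient `i` by `cF ^ i`. -/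
noncomputable def Phi (P : Polynomial (RatFunc K)) : Polynomial (RatFunc K) :=
  ∑ i ∈ P.support, Polynomial.monomial i (S (P.coeff i) * cF ^ i)

theorem coeff_Phi (P : Polynomial (RatFunc K)) (i : ℕ) :
    (Phi S cF P).coeff i = S (P.coeff i) * cF ^ i := by
  rw [Phi, Polynomial.finset_sum_coeff]
  simp only [Polynomial.coeff_monomial]
  rw [Finset.sum_ite_eq' P.support i (fun j => S (P.coeff j) * cF ^ j)]
  by_cases hmem : i ∈ P.support
  · rw [if_pos hmem]
  · rw [if_neg hmem, Polynomial.notMem_support_iff.1 hmem, map_zero, zero_mul]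

theorem alg_Phi (c0 : K)
    (φ : RatFunc (RatFunc K) ≃ₐ[K] RatFunc (RatFunc K))
    (hcoef : ∀ a : RatFunc K, φ (algebraMap (RatFunc K) (RatFunc (RatFunc K)) a)
      = algebraMap (RatFunc K) (RatFunc (RatFunc K)) (S a))
    (hφy : φ RatFunc.X = algebraMap K (RatFunc (RatFunc K)) c0 * RatFunc.X)
    (P : Polynomial (RatFunc K)) :
    algebraMap (Polynomial (RatFunc K)) (RatFunc (RatFunc K))
        (Phi S (algebraMap K (RatFunc K) c0) P)
      = φ (algebraMap (Polynomial (RatFunc K)) (RatFunc (RatFunc K)) P) := by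
  conv_rhs => rw [P.as_sum_support]
  rw [Phi, map_sum, map_sum, map_sum]
  refine Finset.sum_congr rfl ?_
  intro i _
  simp only [← Polynomial.C_mul_X_pow_eq_monomial, map_mul, map_pow, RatFunc.algebraMap_C,
    RatFunc.algebraMap_X, ← RatFunc.algebraMap_eq_C, hcoef, hφy, algMap_tower, mul_pow]
  ring

end Phi

end MixedInv

open MixedInv Polynomial in
/-- Mixed shift/`q`-shift invariant rational functions: if `q` is not a root of unity and
`σ_x^m τ_y^n(f) = f` with `m, n` not both zero, then `f ∈ K(x)` if `m = 0`,
`f ∈ K(y)` if `n = 0`, and `f ∈ K` if `mn ≠ 0`. -/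
theorem mixed_invariant_structure (K : Type) [Field K] [CharZero K] (q : K)
    (hq : ∀ k : ℤ, k ≠ 0 → q ^ k ≠ 1)
    (x y : RatFunc (RatFunc K))
    (hx : x = algebraMap (RatFunc K) (RatFunc (RatFunc K)) RatFunc.X) (hy : y = RatFunc.X)
    (σx τy : RatFunc (RatFunc K) ≃ₐ[K] RatFunc (RatFunc K))
    (hσx : σx x = x + 1 ∧ σx y = y)
    (hτy : τy x = x ∧ τy y = algebraMap K (RatFunc (RatFunc K)) q * y)
    (m n : ℤ) (hmn : ¬(m = 0 ∧ n = 0))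
    (f : RatFunc (RatFunc K)) (hf : (σx ^ m) ((τy ^ n) f) = f) :
    (m = 0 → f ∈ IntermediateField.adjoin K {x}) ∧
    (n = 0 → f ∈ IntermediateField.adjoin K {y}) ∧
    (m ≠ 0 → n ≠ 0 → ∃ c : K, f = algebraMap K (RatFunc (RatFunc K)) c) := by
  subst hx hy
  obtain ⟨hσ1, hσ2⟩ := hσx
  obtain ⟨hτ1, hτ2⟩ := hτy
  rcases eq_or_ne f 0 with rfl | hf0
  · exact ⟨fun _ => zero_mem _, fun _ => zero_mem _, fun _ _ => ⟨0, by simp⟩⟩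
  have hq0 : q ≠ 0 := by
    intro h0
    have h1 : τy RatFunc.X = τy 0 := by rw [hτ2, h0, map_zero, zero_mul, map_zero]
    exact RatFunc.X_ne_zero (τy.injective h1)
  set φ : RatFunc (RatFunc K) ≃ₐ[K] RatFunc (RatFunc K) := σx ^ m * τy ^ n with hφdef
  have hfφ : φ f = f := by rw [hφdef, AlgEquiv.mul_apply]; exact hf
  set c0 : K := q ^ n with hc0def
  have hc00 : c0 ≠ 0 := zpow_ne_zero n hq0
  set Sm : K := ((m : ℤ) : K) with hSmdef
  set S : RatFunc K →ₐ[K] RatFunc K := shiftHom Sm with hSdef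
  set cF : RatFunc K := algebraMap K (RatFunc K) c0 with hcFdef
  have hcF0 : cF ≠ 0 := fun h0 =>
    hc00 ((algebraMap K (RatFunc K)).injective (by rw [map_zero, ← hcFdef]; exact h0))
  -- action of φ on x and y
  have hφx : φ (algebraMap (RatFunc K) (RatFunc (RatFunc K)) RatFunc.X)
      = algebraMap (RatFunc K) (RatFunc (RatFunc K)) RatFunc.X + algebraMap K _ Sm := by
    rw [hφdef, AlgEquiv.mul_apply, pow_fix τy hτ1 n, pow_shift σx hσ1 m, hSmdef,
      map_intCast]
  have hφy : φ (RatFunc.X : RatFunc (RatFunc K))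
      = algebraMap K (RatFunc (RatFunc K)) c0 * RatFunc.X := by
    rw [hφdef, AlgEquiv.mul_apply, pow_scale τy hq0 hτ2 n, map_mul, AlgEquiv.commutes,
      pow_fix σx hσ2 m, hc0def]
  -- action of φ on coefficients
  have hcoef : ∀ a : RatFunc K, φ (algebraMap (RatFunc K) (RatFunc (RatFunc K)) a)
      = algebraMap (RatFunc K) (RatFunc (RatFunc K)) (S a) := by
    have hext : φ.toAlgHom.comp ι = ι.comp S := by
      apply ratfunc_algHom_ext
      rw [AlgHom.comp_apply, AlgHom.comp_apply, ι_apply, ι_apply, hSdef, shiftHom_X,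
        map_add, AlgEquiv.toAlgHom_eq_coe, AlgEquiv.coe_algHom, hφx, ← RatFunc.algebraMap_eq_C,
        algMap_tower]
    intro a
    have := AlgHom.congr_fun hext a
    simpa [ι_apply] using this
  have halg : ∀ P : Polynomial (RatFunc K),
      algebraMap (Polynomial (RatFunc K)) (RatFunc (RatFunc K)) (Phi S cF P)
        = φ (algebraMap (Polynomial (RatFunc K)) (RatFunc (RatFunc K)) P) :=
    alg_Phi S c0 φ hcoef hφy
  -- notation for numerator and denominator
  set p : Polynomial (RatFunc K) := f.num with hpdef
  set rr : Polynomial (RatFunc K) := f.denom with hrrdef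
  have hp0 : p ≠ 0 := RatFunc.num_ne_zero hf0
  have hrr0 : rr ≠ 0 := f.denom_ne_zero
  have hcop : IsCoprime p rr := f.isCoprime_num_denom
  have hmon : rr.Monic := f.monic_denom
  have hrrE : algebraMap (Polynomial (RatFunc K)) (RatFunc (RatFunc K)) rr ≠ 0 :=
    RatFunc.algebraMap_ne_zero hrr0
  have hPhirrE : algebraMap (Polynomial (RatFunc K)) (RatFunc (RatFunc K)) (Phi S cF rr) ≠ 0 := by
    rw [halg]
    intro h0
    exact hrrE (φ.injective (by rw [h0, map_zero]))
  have hrepr : f = algebraMap (Polynomial (RatFunc K)) (RatFunc (RatFunc K)) p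
      / algebraMap (Polynomial (RatFunc K)) (RatFunc (RatFunc K)) rr :=
    (RatFunc.num_div_denom f).symm
  have hcross : Phi S cF p * rr = p * Phi S cF rr := by
    have e1 : algebraMap (Polynomial (RatFunc K)) (RatFunc (RatFunc K)) (Phi S cF p)
        / algebraMap (Polynomial (RatFunc K)) (RatFunc (RatFunc K)) (Phi S cF rr)
        = algebraMap (Polynomial (RatFunc K)) (RatFunc (RatFunc K)) p
          / algebraMap (Polynomial (RatFunc K)) (RatFunc (RatFunc K)) rr := by
      rw [halg, halg, ← map_div₀ φ, ← hrepr]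
      exact hfφ
    rw [div_eq_div_iff hPhirrE hrrE] at e1
    apply RatFunc.algebraMap_injective (RatFunc K)
    rw [map_mul, map_mul]
    exact e1
  set d : ℕ := rr.natDegree with hddef
  have hSinj : Function.Injective S := S.toRingHom.injective
  have hdvdp : p ∣ Phi S cF p := hcop.dvd_of_dvd_mul_right ⟨Phi S cF rr, hcross⟩
  have hdvdr : rr ∣ Phi S cF rr :=
    hcop.symm.dvd_of_dvd_mul_right ⟨Phi S cF p, by linear_combination -hcross⟩
  have hfactor : ∀ P : Polynomial (RatFunc K), P ≠ 0 → P ∣ Phi S cF P →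
      ∃ v : RatFunc K, Phi S cF P = P * Polynomial.C v := by
    intro P hP hdvd
    obtain ⟨u, hu⟩ := hdvd
    have hPhiP0 : Phi S cF P ≠ 0 := by
      intro h0
      have h1 := coeff_Phi S cF P P.natDegree
      rw [h0, Polynomial.coeff_zero] at h1
      have h2 : S P.leadingCoeff ≠ 0 := fun hz =>
        Polynomial.leadingCoeff_ne_zero.2 hP (hSinj (by rw [hz, map_zero]))
      rw [Polynomial.coeff_natDegree] at h1
      exact mul_ne_zero h2 (pow_ne_zero _ hcF0) h1.symm
    have hu0 : u ≠ 0 := fun h0 => hPhiP0 (by rw [hu, h0, mul_zero])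
    have hdegle : (Phi S cF P).natDegree ≤ P.natDegree := by
      refine Polynomial.natDegree_le_iff_coeff_eq_zero.2 (fun N hN => ?_)
      rw [coeff_Phi, Polynomial.coeff_eq_zero_of_natDegree_lt hN, map_zero, zero_mul]
    have hdegu : u.natDegree = 0 := by
      have h2 := Polynomial.natDegree_mul hP hu0
      rw [← hu] at h2
      omega
    exact ⟨u.coeff 0, by rw [hu, ← Polynomial.eq_C_of_natDegree_eq_zero hdegu]⟩
  obtain ⟨v, hv⟩ := hfactor p hp0 hdvdp
  obtain ⟨w, hw⟩ := hfactor rr hrr0 hdvdr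
  have hvw : v = w := by
    have h2 : (p * rr) * Polynomial.C v = (p * rr) * Polynomial.C w := by
      rw [hv, hw] at hcross
      linear_combination hcross
    have h3 := mul_left_cancel₀ (mul_ne_zero hp0 hrr0) h2
    exact Polynomial.C_injective h3
  have hrelp : ∀ i, S (p.coeff i) * cF ^ i = p.coeff i * v := by
    intro i
    have h1 := congrArg (fun P => P.coeff i) hv
    simpa [coeff_Phi, Polynomial.coeff_mul_C] using h1
  have hrelr : ∀ i, S (rr.coeff i) * cF ^ i = rr.coeff i * v := by
    intro i
    have h1 := congrArg (fun P => P.coeff i) hw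
    rw [hvw]
    simpa [coeff_Phi, Polynomial.coeff_mul_C] using h1
  have hvval : v = cF ^ d := by
    have h1 := hrelr d
    rw [hmon.coeff_natDegree] at h1
    simp only [map_one, one_mul] at h1
    exact h1.symm
  simp only [hvval] at hrelp hrelr
  have hkey : n ≠ 0 → ∀ (i j : ℕ) (a b : RatFunc K), a ≠ 0 → b ≠ 0 →
      S a * cF ^ i = a * cF ^ d → S b * cF ^ j = b * cF ^ d → i = j := by
    intro hn i j a b ha hb hra hrb
    have hpowi : (cF : RatFunc K) ^ i ≠ 0 := pow_ne_zero _ hcF0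
    have hpowj : (cF : RatFunc K) ^ j ≠ 0 := pow_ne_zero _ hcF0
    have hSa : S a = a * cF ^ d / cF ^ i := by
      rw [eq_div_iff hpowi]
      exact hra
    have hSb : S b = b * cF ^ d / cF ^ j := by
      rw [eq_div_iff hpowj]
      exact hrb
    have hC : RatFunc.C (c0 ^ ((j : ℤ) - (i : ℤ))) = cF ^ (j : ℤ) / cF ^ (i : ℤ) := by
      rw [← RatFunc.algebraMap_eq_C, map_zpow₀, ← hcFdef, zpow_sub₀ hcF0]
    have hSt : S (a / b) = RatFunc.C (c0 ^ ((j : ℤ) - (i : ℤ))) * (a / b) := by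
      rw [map_div₀, hSa, hSb, hC, zpow_natCast, zpow_natCast]
      have hbne : b * cF ^ d / cF ^ j ≠ 0 := by
        apply div_ne_zero (mul_ne_zero hb (pow_ne_zero _ hcF0)) hpowj
      field_simp
    have h1 : c0 ^ ((j : ℤ) - (i : ℤ)) = 1 := shift_eq_smul (div_ne_zero ha hb) hSt
    have h2 : q ^ (n * ((j : ℤ) - (i : ℤ))) = 1 := by
      rw [zpow_mul, ← hc0def]
      exact h1
    have h3 : n * ((j : ℤ) - (i : ℤ)) = 0 := by
      by_contra hc
      exact hq _ hc h2
    rcases mul_eq_zero.1 h3 with h4 | h4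
    · exact absurd h4 hn
    · omega
  by_cases hn : n = 0
  · -- n = 0 : f ∈ K(y)
    have hm : m ≠ 0 := fun h => hmn ⟨h, hn⟩
    have hSm0 : Sm ≠ 0 := by rw [hSmdef]; exact_mod_cast hm
    have hcF1 : cF = (1 : RatFunc K) := by rw [hcFdef, hc0def, hn, zpow_zero, map_one]
    have hcoefK : ∀ (P : Polynomial (RatFunc K)),
        (∀ i, S (P.coeff i) * cF ^ i = P.coeff i * cF ^ d) →
        ∀ i, ∃ k : K, P.coeff i = algebraMap K (RatFunc K) k := by
      intro P hP i
      have h1 := hP i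
      rw [hcF1, one_pow, one_pow, mul_one, mul_one] at h1
      obtain ⟨k, hk⟩ := shift_fixed hSm0 h1
      exact ⟨k, by rw [hk, RatFunc.algebraMap_eq_C]⟩
    have hmem : f ∈ IntermediateField.adjoin K {(RatFunc.X : RatFunc (RatFunc K))} := by
      rw [hrepr]
      exact div_mem (mem_adjoinY p (hcoefK p hrelp)) (mem_adjoinY rr (hcoefK rr hrelr))
    exact ⟨fun hm' => absurd ⟨hm', hn⟩ hmn, fun _ => hmem, fun _ hn' => absurd hn hn'⟩
  · -- n ≠ 0 : f is a constant rational function in x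
    have hsame : ∀ i j, (p.coeff i ≠ 0 ∨ rr.coeff i ≠ 0) →
        (p.coeff j ≠ 0 ∨ rr.coeff j ≠ 0) → i = j := by
      intro i j hi hj
      rcases hi with hi | hi <;> rcases hj with hj | hj
      exacts [hkey hn i j _ _ hi hj (hrelp i) (hrelp j),
        hkey hn i j _ _ hi hj (hrelp i) (hrelr j),
        hkey hn i j _ _ hi hj (hrelr i) (hrelp j),
        hkey hn i j _ _ hi hj (hrelr i) (hrelr j)]
    have hzero : p.coeff 0 ≠ 0 ∨ rr.coeff 0 ≠ 0 := by
      by_contra hcon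
      push_neg at hcon
      exact Polynomial.not_isUnit_X
        (hcop.isUnit_of_dvd' (Polynomial.X_dvd_iff.2 hcon.1) (Polynomial.X_dvd_iff.2 hcon.2))
    have hrrc : rr.coeff d ≠ 0 := by
      rw [hmon.coeff_natDegree]
      exact one_ne_zero
    have hd0 : d = 0 := hsame d 0 (Or.inr hrrc) hzero
    have hrr1 : rr = 1 := hmon.natDegree_eq_zero.1 hd0
    have hpdeg : p.natDegree = 0 := by
      refine hsame p.natDegree 0 (Or.inl ?_) hzero
      exact Polynomial.leadingCoeff_ne_zero.2 hp0
    have hpC : p = Polynomial.C (p.coeff 0) := Polynomial.eq_C_of_natDegree_eq_zero hpdeg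
    have hfval : f = algebraMap (RatFunc K) (RatFunc (RatFunc K)) (p.coeff 0) := by
      rw [hrepr, hrr1, map_one, div_one]
      conv_lhs => rw [hpC]
      rw [RatFunc.algebraMap_C, ← RatFunc.algebraMap_eq_C]
    refine ⟨fun _ => ?_, fun hn' => absurd hn' hn, fun hm _ => ?_⟩
    · rw [hfval]
      exact mem_adjoinX _
    · have hSm0 : Sm ≠ 0 := by rw [hSmdef]; exact_mod_cast hm
      have h1 := hrelp 0
      rw [hd0, pow_zero, mul_one, mul_one] at h1
      obtain ⟨c, hc⟩ := shift_fixed hSm0 h1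
      refine ⟨c, ?_⟩
      rw [hfval, hc, ← RatFunc.algebraMap_eq_C, algMap_tower]
end

section
/- Let K be an algebraically closed field of characteristic zero, θ_x ∈ {σ_x, τ_{q,x}} acting on K(x,y), and let p ∈ K(x)[y] be an irreducible monic polynomial in y over K(x). Then for any nonzero integer m, either gcd(p, θ_x^m(p)) = 1 in K(x)[y], or p ∈ K[y]. -/
open Polynomial

lemma coeff_comp_C_mul_X {K : Type} [Field K] (u : K) (p : K[X]) (n : ℕ) :
    (p.comp (C u * X)).coeff n = u ^ n * p.coeff n := by
  induction p using Polynomial.induction_on' with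
  | add p q hp hq => simp [add_comp, hp, hq, mul_add]
  | monomial k a =>
      rw [monomial_comp, mul_pow, ← C_pow, ← mul_assoc, ← C_mul, C_mul_X_pow_eq_monomial]
      simp only [coeff_monomial]
      rcases eq_or_ne n k with rfl | h
      · simp [mul_comm]
      · simp [h, Ne.symm h]

lemma shift_periodic_natDegree_eq_zero {K : Type} [Field K] [CharZero K] [IsAlgClosed K]
    {c : K} (hc : c ≠ 0) {b : K[X]} (hb : b ≠ 0) (h : b.comp (X + C c) = b) :
    b.natDegree = 0 := by
  by_contra hd
  have hdeg : b.degree ≠ 0 := by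
    simpa [degree_eq_natDegree hb] using fun hh => hd (by exact_mod_cast hh)
  obtain ⟨α, hα⟩ := IsAlgClosed.exists_root b hdeg
  have hroot : ∀ k : ℕ, b.IsRoot (α + k * c) := by
    intro k
    induction k with
    | zero => simpa using hα
    | succ k ih =>
        have : b.eval (α + k * c + c) = 0 := by
          have := congrArg (Polynomial.eval (α + k * c)) h
          rw [eval_comp] at this
          simp only [eval_add, eval_X, eval_C] at this
          rw [this]; exact ih
        simpa [add_mul, add_assoc] using this
  have hinj : Function.Injective fun k : ℕ => α + k * c := by
    intro i j hij
    have h2 : (i : K) * c = j * c := add_left_cancel hij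
    exact_mod_cast mul_right_cancel₀ hc h2
  exact (Polynomial.finite_setOf_isRoot hb).not_infinite
    (Set.infinite_of_injective_forall_mem hinj hroot)

open Polynomial

lemma algEquiv_algebraMap_comp {K : Type} [Field K]
    (ψ : RatFunc K ≃ₐ[K] RatFunc K) (s : K[X])
    (hs : ψ RatFunc.X = algebraMap K[X] (RatFunc K) s) (a : K[X]) :
    ψ (algebraMap K[X] (RatFunc K) a) = algebraMap K[X] (RatFunc K) (a.comp s) := by
  have key : (ψ.toAlgHom.comp (IsScalarTower.toAlgHom K K[X] (RatFunc K)))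
      = (IsScalarTower.toAlgHom K K[X] (RatFunc K)).comp (Polynomial.aeval s) := by
    apply Polynomial.algHom_ext
    simpa [RatFunc.algebraMap_X] using hs
  have := congrFun (congrArg DFunLike.coe key) a
  simpa [Polynomial.aeval_def, Polynomial.comp] using this

lemma comp_ne_zero'_s10 {K : Type} [Field K] {b s : K[X]} (hb : b ≠ 0) (hs1 : s.natDegree = 1) :
    b.comp s ≠ 0 := by
  intro h
  rcases Polynomial.comp_eq_zero_iff.mp h with h' | ⟨_, h2⟩
  · exact hb h'
  · rw [h2] at hs1; simp at hs1

lemma num_denom_comp_eq {K : Type} [Field K]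
    (ψ : RatFunc K ≃ₐ[K] RatFunc K) (s : K[X])
    (hs : ψ RatFunc.X = algebraMap K[X] (RatFunc K) s) (hs1 : s.natDegree = 1)
    (f : RatFunc K) (hf : ψ f = f) :
    f.num.comp s * f.denom = f.num * f.denom.comp s := by
  set a := f.num with ha
  set b := f.denom with hb
  have hb0 : b ≠ 0 := f.denom_ne_zero
  have hbc0 : b.comp s ≠ 0 := comp_ne_zero'_s10 hb0 hs1
  have h1 : ψ f = algebraMap K[X] (RatFunc K) (a.comp s) / algebraMap K[X] (RatFunc K) (b.comp s) := by
    rw [← f.num_div_denom, map_div₀, algEquiv_algebraMap_comp ψ s hs,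
      algEquiv_algebraMap_comp ψ s hs]
  rw [hf, ← f.num_div_denom] at h1
  rw [div_eq_div_iff (RatFunc.algebraMap_ne_zero hb0) (RatFunc.algebraMap_ne_zero hbc0)] at h1
  apply RatFunc.algebraMap_injective K
  rw [map_mul, map_mul]
  linear_combination -h1

lemma shift_fixed_mem_range {K : Type} [Field K] [CharZero K] [IsAlgClosed K]
    {c : K} (hc : c ≠ 0) (ψ : RatFunc K ≃ₐ[K] RatFunc K)
    (hs : ψ RatFunc.X = RatFunc.X + RatFunc.C c)
    {f : RatFunc K} (hf : ψ f = f) : f ∈ Set.range (algebraMap K (RatFunc K)) := by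
  set s : K[X] := X + C c with hsdef
  have hs' : ψ RatFunc.X = algebraMap K[X] (RatFunc K) s := by
    rw [hs, hsdef, map_add, RatFunc.algebraMap_X, RatFunc.algebraMap_C]
  have hs1 : s.natDegree = 1 := natDegree_X_add_C c
  have E := num_denom_comp_eq ψ s hs' hs1 f hf
  set a := f.num with ha
  set b := f.denom with hb
  have hb0 : b ≠ 0 := f.denom_ne_zero
  have hcop : IsCoprime a b := f.isCoprime_num_denom
  -- b ∣ b.comp s
  have hdvd : b ∣ b.comp s := by
    apply (hcop.symm).dvd_of_dvd_mul_left (y := a)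
    exact ⟨a.comp s, by linear_combination -E⟩
  obtain ⟨v, hv⟩ := hdvd
  have hmb : b.Monic := f.monic_denom
  have hmbc : (b.comp s).Monic := hmb.comp_X_add_C c
  have hdegbc : (b.comp s).natDegree = b.natDegree := by
    rw [natDegree_comp, hs1, mul_one]
  have hvm : v.Monic := by
    have h1 : (b * v).Monic := hv ▸ hmbc
    have hv0 : v ≠ 0 := fun h => comp_ne_zero'_s10 hb0 hs1 (by rw [hv, h, mul_zero])
    have := h1.leadingCoeff
    rw [leadingCoeff_mul, hmb.leadingCoeff, one_mul] at this
    exact this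
  have hdegv : v.natDegree = 0 := by
    have := hdegbc
    rw [hv, hmb.natDegree_mul hvm] at this
    omega
  have hv1 : v = 1 := hvm.natDegree_eq_zero.mp hdegv
  have hbeq : b.comp s = b := by rw [hv, hv1, mul_one]
  have haeq : a.comp s = a := by
    have := E
    rw [hbeq] at this
    exact mul_right_cancel₀ hb0 this
  have hdb : b.natDegree = 0 := shift_periodic_natDegree_eq_zero hc hb0 hbeq
  rcases eq_or_ne a 0 with ha0 | ha0
  · have : f = 0 := RatFunc.num_eq_zero_iff.mp (ha ▸ ha0)
    exact ⟨0, by simp [this]⟩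
  have hda : a.natDegree = 0 := shift_periodic_natDegree_eq_zero hc ha0 haeq
  refine ⟨a.coeff 0 / b.coeff 0, ?_⟩
  rw [map_div₀, IsScalarTower.algebraMap_apply K K[X] (RatFunc K),
    IsScalarTower.algebraMap_apply K K[X] (RatFunc K)]
  simp only [Polynomial.algebraMap_eq]
  rw [← eq_C_of_natDegree_eq_zero hda, ← eq_C_of_natDegree_eq_zero hdb, f.num_div_denom]

lemma qshift_fixed_mem_range {K : Type} [Field K]
    {u : K} (hu0 : u ≠ 0) (hu : ∀ j k : ℕ, u ^ j = u ^ k → j = k)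
    (ψ : RatFunc K ≃ₐ[K] RatFunc K)
    (hs : ψ RatFunc.X = RatFunc.C u * RatFunc.X)
    {f : RatFunc K} (hf : ψ f = f) : f ∈ Set.range (algebraMap K (RatFunc K)) := by
  set s : K[X] := C u * X with hsdef
  have hs' : ψ RatFunc.X = algebraMap K[X] (RatFunc K) s := by
    rw [hs, hsdef, map_mul, RatFunc.algebraMap_X, RatFunc.algebraMap_C]
  have hs1 : s.natDegree = 1 := by
    rw [hsdef, natDegree_C_mul hu0, natDegree_X]
  have E := num_denom_comp_eq ψ s hs' hs1 f hf
  set a := f.num with ha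
  set b := f.denom with hb
  have hb0 : b ≠ 0 := f.denom_ne_zero
  have hcop : IsCoprime a b := f.isCoprime_num_denom
  rcases eq_or_ne a 0 with ha0 | ha0
  · have : f = 0 := RatFunc.num_eq_zero_iff.mp (ha ▸ ha0)
    exact ⟨0, by simp [this]⟩
  have hmb : b.Monic := f.monic_denom
  set d := b.natDegree with hd
  -- b ∣ b.comp s
  have hdvd : b ∣ b.comp s := by
    apply (hcop.symm).dvd_of_dvd_mul_left (y := a)
    exact ⟨a.comp s, by linear_combination -E⟩
  obtain ⟨v, hv⟩ := hdvd
  have hdegbc : (b.comp s).natDegree = d := by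
    rw [natDegree_comp, hs1, mul_one]
  have hv0 : v ≠ 0 := fun h => comp_ne_zero'_s10 hb0 hs1 (by rw [hv, h, mul_zero])
  have hdegv : v.natDegree = 0 := by
    have h2 := hdegbc
    rw [hv, natDegree_mul hb0 hv0] at h2
    omega
  have hvC : v = C (v.coeff 0) := eq_C_of_natDegree_eq_zero hdegv
  -- compute v.coeff 0 = u ^ d by comparing coeff d
  have hcoeffd : (b.comp s).coeff d = u ^ d := by
    rw [hsdef, coeff_comp_C_mul_X, show b.coeff d = 1 from by rw [hd]; exact hmb.coeff_natDegree,
      mul_one]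
  have hw : v.coeff 0 = u ^ d := by
    rw [hv, hvC] at hcoeffd
    rw [coeff_mul_C, hmb.coeff_natDegree, one_mul] at hcoeffd
    exact hcoeffd
  have hbeq : b.comp s = C (u ^ d) * b := by
    rw [hv, hvC, hw, mul_comm]
  -- a.comp s = C (u^d) * a
  have haeq : a.comp s = C (u ^ d) * a := by
    apply mul_right_cancel₀ hb0
    rw [E, hbeq]; ring
  -- coefficients vanish away from d
  have hbj : ∀ j, j ≠ d → b.coeff j = 0 := by
    intro j hj
    have := congrArg (fun p => Polynomial.coeff p j) hbeq
    simp only [hsdef, coeff_comp_C_mul_X, coeff_C_mul] at this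
    by_contra hbj0
    exact hj (hu j d (mul_right_cancel₀ hbj0 (by linear_combination this)))
  have haj : ∀ j, j ≠ d → a.coeff j = 0 := by
    intro j hj
    have := congrArg (fun p => Polynomial.coeff p j) haeq
    simp only [hsdef, coeff_comp_C_mul_X, coeff_C_mul] at this
    by_contra haj0
    exact hj (hu j d (mul_right_cancel₀ haj0 (by linear_combination this)))
  rcases eq_or_ne d 0 with hd0 | hd0
  · have hda : a.natDegree = 0 := by
      by_contra h
      have h2 := haj a.natDegree (by omega)
      rw [coeff_natDegree] at h2
      exact ha0 (leadingCoeff_eq_zero.mp h2)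
    refine ⟨a.coeff 0 / b.coeff 0, ?_⟩
    rw [map_div₀, IsScalarTower.algebraMap_apply K K[X] (RatFunc K),
      IsScalarTower.algebraMap_apply K K[X] (RatFunc K)]
    simp only [Polynomial.algebraMap_eq]
    rw [← eq_C_of_natDegree_eq_zero hda, ← eq_C_of_natDegree_eq_zero (hd ▸ hd0 : b.natDegree = 0),
      f.num_div_denom]
  · -- X divides both a and b : contradiction with coprimality
    have hXa : X ∣ a := X_dvd_iff.mpr (haj 0 (Ne.symm hd0))
    have hXb : X ∣ b := X_dvd_iff.mpr (hbj 0 (Ne.symm hd0))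
    exact absurd (hcop.isUnit_of_dvd' hXa hXb) not_isUnit_X

lemma ratfunc_C_fixed {K : Type} [Field K] (ψ : RatFunc K ≃ₐ[K] RatFunc K) (c : K) :
    ψ (RatFunc.C c) = RatFunc.C c := by
  rw [← RatFunc.algebraMap_eq_C]
  exact ψ.commutes c

lemma zpow_X_shift {K : Type} [Field K] (θ : RatFunc K ≃ₐ[K] RatFunc K)
    (hθ : θ RatFunc.X = RatFunc.X + 1) (n : ℤ) :
    (θ ^ n) RatFunc.X = RatFunc.X + RatFunc.C (n : K) := by
  have hinv : θ⁻¹ RatFunc.X = RatFunc.X - 1 := by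
    apply θ.injective
    rw [← AlgEquiv.mul_apply, mul_inv_cancel, AlgEquiv.one_apply, map_sub, hθ, map_one]
    ring
  induction n using Int.induction_on with
  | zero => simp
  | succ n ih =>
      rw [show ((n : ℤ) + 1) = (n + 1 : ℤ) from rfl, zpow_add_one, AlgEquiv.mul_apply, hθ,
        map_add, ih, map_one]
      push_cast
      rw [map_add, map_one]
      ring
  | pred n ih =>
      rw [show (-(n : ℤ) - 1) = (-(n:ℤ)) + (-1 : ℤ) from by ring, zpow_add, zpow_neg_one,
        AlgEquiv.mul_apply, hinv, map_sub, ih, map_one]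
      push_cast
      simp only [map_add, map_neg, map_one]
      ring

lemma zpow_X_qshift {K : Type} [Field K] (θ : RatFunc K ≃ₐ[K] RatFunc K) {q : K} (hq0 : q ≠ 0)
    (hθ : θ RatFunc.X = RatFunc.C q * RatFunc.X) (n : ℤ) :
    (θ ^ n) RatFunc.X = RatFunc.C (q ^ n) * RatFunc.X := by
  have hinv : θ⁻¹ RatFunc.X = RatFunc.C q⁻¹ * RatFunc.X := by
    apply θ.injective
    rw [← AlgEquiv.mul_apply, mul_inv_cancel, AlgEquiv.one_apply, map_mul, hθ,
      ratfunc_C_fixed]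
    rw [← mul_assoc, ← map_mul, inv_mul_cancel₀ hq0, map_one, one_mul]
  induction n using Int.induction_on with
  | zero => simp
  | succ n ih =>
      rw [show ((n : ℤ) + 1) = (n + 1 : ℤ) from rfl, zpow_add_one, AlgEquiv.mul_apply, hθ,
        map_mul, ratfunc_C_fixed, ih, zpow_add_one₀ hq0, map_mul]
      ring
  | pred n ih =>
      rw [show (-(n : ℤ) - 1) = (-(n:ℤ)) + (-1 : ℤ) from by ring, zpow_add, zpow_neg_one,
        AlgEquiv.mul_apply, hinv, map_mul, ratfunc_C_fixed, ih,
        zpow_add₀ hq0, zpow_neg_one, map_mul]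
      ring

/-- If `p ∈ K(x)[y]` is irreducible and monic, then for any nonzero integer `m`, either
`gcd(p, θ_x^m(p)) = 1` in `K(x)[y]`, or `p ∈ K[y]`; here `θ_x ∈ {σ_x, τ_{q,x}}` acts on
`K(x)[y]` through the coefficients. -/
theorem coprime_or_constant_coeffs (K : Type) [Field K] [CharZero K] [IsAlgClosed K]
    (q : K) (hq : ∀ k : ℤ, k ≠ 0 → q ^ k ≠ 1)
    (θ : RatFunc K ≃ₐ[K] RatFunc K)
    (hθ : θ RatFunc.X = RatFunc.X + 1 ∨ θ RatFunc.X = RatFunc.C q * RatFunc.X)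
    (p : Polynomial (RatFunc K)) (hirr : Irreducible p) (hmon : p.Monic)
    (m : ℤ) (hm : m ≠ 0) :
    IsCoprime p (p.map ((θ ^ m).toAlgHom.toRingHom)) ∨
      ∃ p₀ : Polynomial K, p = p₀.map (algebraMap K (RatFunc K)) := by
  set ψ : RatFunc K ≃ₐ[K] RatFunc K := θ ^ m with hψ
  set φ : RatFunc K →+* RatFunc K := ψ.toAlgHom.toRingHom with hφ
  rcases EuclideanDomain.dvd_or_coprime p (p.map φ) hirr with hdvd | hcop
  swap
  · exact Or.inl hcop
  right
  -- p = p.map φ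
  have hmapeq : p.map φ = Polynomial.mapEquiv ψ.toRingEquiv p := rfl
  have hirr' : Irreducible (p.map φ) := by
    rw [hmapeq]; exact hirr.map (Polynomial.mapEquiv ψ.toRingEquiv)
  have hmon' : (p.map φ).Monic := hmon.map φ
  have heq : p = p.map φ :=
    Polynomial.eq_of_monic_of_associated hmon hmon' (hirr.associated_of_dvd hirr' hdvd)
  have hfix : ∀ n : ℕ, ψ (p.coeff n) = p.coeff n := by
    intro n
    conv_rhs => rw [heq]
    rw [Polynomial.coeff_map]
    rfl
  -- each coefficient is in the range of algebraMap K (RatFunc K)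
  have hrange : ∀ n : ℕ, p.coeff n ∈ Set.range (algebraMap K (RatFunc K)) := by
    intro n
    rcases hθ with hθ | hθ
    · have hc : ((m : K)) ≠ 0 := Int.cast_ne_zero.mpr hm
      have hsX : ψ RatFunc.X = RatFunc.X + RatFunc.C ((m : K)) := zpow_X_shift θ hθ m
      exact shift_fixed_mem_range hc ψ hsX (hfix n)
    · have hq0 : q ≠ 0 := by
        rintro rfl
        apply RatFunc.X_ne_zero (K := K)
        have h0 : θ RatFunc.X = 0 := by rw [hθ, map_zero, zero_mul]
        have := θ.injective (h0.trans (map_zero θ).symm)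
        exact this
      have hsX : ψ RatFunc.X = RatFunc.C (q ^ m) * RatFunc.X := zpow_X_qshift θ hq0 hθ m
      have hu0 : q ^ m ≠ 0 := zpow_ne_zero m hq0
      have hu : ∀ j k : ℕ, (q ^ m) ^ j = (q ^ m) ^ k → j = k := by
        intro j k hjk
        by_contra hne
        apply hq (m * j - m * k) (by
          intro h
          apply hne
          have : m * (j - k : ℤ) = 0 := by ring_nf; linarith [h]
          rcases mul_eq_zero.mp this with h | h
          · exact absurd h hm
          · omega)
        rw [← zpow_natCast (q ^ m) j, ← zpow_mul] at hjk
        rw [← zpow_natCast (q ^ m) k, ← zpow_mul] at hjk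
        rw [zpow_sub₀ hq0, hjk, div_self (by exact zpow_ne_zero _ hq0)]
      exact qshift_fixed_mem_range hu0 hu ψ hsX (hfix n)
  obtain ⟨p₀, hp₀⟩ := (Polynomial.mem_lifts p).mp
    ((Polynomial.lifts_iff_coeff_lifts p).mpr hrange)
  exact ⟨p₀, hp₀.symm⟩
end

section
/- Let F be a field of characteristic zero, σ the shift z ↦ z+1 on F(z), and let f = a/b + a'/σ^k(b) where b ∈ F[z] is irreducible monic, k a positive integer, a, a' ∈ F[z] with deg(a), deg(a') < deg(b). Then f is σ-summable in F(z) (i.e., f = σ(g) - g for some g ∈ F(z)) if and only if σ^{-k}(a') + a = 0. -/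
set_option linter.unusedSectionVars false
set_option maxHeartbeats 1000000

open Polynomial

variable {F : Type} [Field F] [CharZero F]

local notation "A" => algebraMap (Polynomial F) (RatFunc F)

lemma sigma_algebraMap (σ : RatFunc F ≃ₐ[F] RatFunc F) (hσ : σ RatFunc.X = RatFunc.X + 1)
    (p : Polynomial F) :
    σ (A p) = A (taylor 1 p) := by
  have h : (σ.toAlgHom.comp (IsScalarTower.toAlgHom F (Polynomial F) (RatFunc F)))
      = ((IsScalarTower.toAlgHom F (Polynomial F) (RatFunc F)).comp (taylorAlgHom 1)) := by
    apply Polynomial.algHom_ext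
    simp [taylor_X, hσ, RatFunc.algebraMap_X]
  exact DFunLike.congr_fun h p

lemma sigma_pow_algebraMap (σ : RatFunc F ≃ₐ[F] RatFunc F) (hσ : σ RatFunc.X = RatFunc.X + 1)
    (n : ℕ) (p : Polynomial F) :
    (σ ^ n) (A p) = A (taylor (n : F) p) := by
  induction n with
  | zero => simp
  | succ n ih =>
      rw [pow_succ', AlgEquiv.mul_apply, ih, sigma_algebraMap σ hσ, taylor_taylor]
      norm_num [add_comm]

lemma degree_taylor (p : Polynomial F) (c : F) : (taylor c p).degree = p.degree := by
  by_cases hp : p = 0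
  · simp [hp]
  · rw [degree_eq_natDegree hp, degree_eq_natDegree (by
      rwa [taylor_apply, Ne, comp_X_add_C_eq_zero_iff]), natDegree_taylor]


variable {F : Type} [Field F] [CharZero F]

local notation "A" => algebraMap (Polynomial F) (RatFunc F)

lemma taylor_ne_self (b : Polynomial F) (hbmon : b.Monic) (hd : 0 < b.natDegree)
    (c : F) (hc : c ≠ 0) : taylor c b ≠ b := by
  intro h
  have h1 : (taylor c b).coeff (b.natDegree - 1) = b.coeff (b.natDegree - 1) := by rw [h]
  rw [taylor_coeff] at h1
  set m := b.natDegree - 1 with hm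
  have hdm : m + 1 = b.natDegree := by omega
  -- evaluate hasseDeriv m b at c
  have hnd : (hasseDeriv m b).natDegree ≤ 1 := by
    have := natDegree_hasseDeriv_le b m
    omega
  have heval : (hasseDeriv m b).eval c
      = (hasseDeriv m b).coeff 0 + (hasseDeriv m b).coeff 1 * c := by
    conv_lhs => rw [eq_X_add_C_of_natDegree_le_one hnd]
    simp only [eval_add, eval_mul, eval_C, eval_X]
    ring
  have hc0 : (hasseDeriv m b).coeff 0 = b.coeff m := by
    rw [hasseDeriv_coeff]; simp
  have hc1 : (hasseDeriv m b).coeff 1 = (b.natDegree : F) := by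
    rw [hasseDeriv_coeff]
    rw [show 1 + m = b.natDegree from by omega]
    rw [show b.natDegree.choose m = b.natDegree from by
      rw [show m = b.natDegree - 1 from rfl]
      rw [← Nat.choose_symm (by omega)]
      simp [Nat.sub_sub_self (by omega : 1 ≤ b.natDegree)]]
    rw [hbmon.coeff_natDegree]
    simp
  rw [heval, hc0, hc1] at h1
  have : (b.natDegree : F) * c = 0 := by linear_combination h1
  rcases mul_eq_zero.mp this with h2 | h2
  · exact absurd (Nat.cast_eq_zero.mp h2) (by omega)
  · exact hc h2

lemma taylor_irreducible (b : Polynomial F) (hbirr : Irreducible b) (c : F) :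
    Irreducible (taylor c b) := by
  have : taylor c b = algEquivAevalXAddC c b := by
    simp [taylor_apply, algEquivAevalXAddC, AlgEquiv.ofAlgHom]
    rw [← comp_eq_aeval]
  rw [this]
  exact (MulEquiv.irreducible_iff (algEquivAevalXAddC c)).mpr hbirr


variable {F : Type} [Field F] [CharZero F]

local notation "A" => algebraMap (Polynomial F) (RatFunc F)

open scoped Classical in
lemma denom_simple (b r : Polynomial F) (hbirr : Irreducible b) (hbmon : b.Monic)
    (hnd : ¬ b ∣ r) : (A r / A b).denom = b := by
  rw [RatFunc.denom_div r hbmon.ne_zero]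
  have hcop : IsCoprime r b := (hbirr.coprime_iff_not_dvd.mpr hnd).symm
  have hu : IsUnit (gcd r b) := (gcd_isUnit_iff r b).mpr hcop
  have h1 : gcd r b = 1 := by rw [← normalize_gcd, normalize_eq_one]; exact hu
  rw [h1]
  simp [hbmon.leadingCoeff]

lemma denom_sum_dvd {ι : Type} (s : Finset ι) (t : ι → RatFunc F) :
    (∑ i ∈ s, t i).denom ∣ ∏ i ∈ s, (t i).denom := by
  induction s using Finset.cons_induction with
  | empty => simp
  | cons a s ha ih =>
      rw [Finset.sum_cons, Finset.prod_cons]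
      exact (RatFunc.denom_add_dvd _ _).trans (mul_dvd_mul_left _ ih)

lemma prod_monic_irred_dvd {ι : Type} (s : Finset ι) (p : ι → Polynomial F)
    (hmon : ∀ i ∈ s, (p i).Monic) (hirr : ∀ i ∈ s, Irreducible (p i))
    (hne : ∀ i ∈ s, ∀ j ∈ s, i ≠ j → p i ≠ p j)
    (m : Polynomial F) (hd : ∀ i ∈ s, p i ∣ m) :
    (∏ i ∈ s, p i) ∣ m := by
  induction s using Finset.cons_induction with
  | empty => simp
  | cons a s ha ih =>
      rw [Finset.prod_cons]
      have hprime : Prime (p a) := (hirr a (Finset.mem_cons_self a s)).prime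
      have hcop : IsCoprime (p a) (∏ i ∈ s, p i) := by
        apply (hirr a (Finset.mem_cons_self a s)).coprime_iff_not_dvd.mpr
        intro hdvd
        obtain ⟨i, hi, hdi⟩ := hprime.exists_mem_finset_dvd hdvd
        have : p a = p i := eq_of_monic_of_associated
          (hmon a (Finset.mem_cons_self a s)) (hmon i (Finset.mem_cons.mpr <| Or.inr hi))
          ((hirr a (Finset.mem_cons_self a s)).associated_of_dvd
            (hirr i (Finset.mem_cons.mpr <| Or.inr hi)) hdi)
        exact hne a (Finset.mem_cons_self a s) i (Finset.mem_cons.mpr <| Or.inr hi)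
          (by rintro rfl; exact ha hi) this
      exact hcop.mul_dvd (hd a (Finset.mem_cons_self a s))
        (ih (fun i hi => hmon i (Finset.mem_cons.mpr <| Or.inr hi))
            (fun i hi => hirr i (Finset.mem_cons.mpr <| Or.inr hi))
            (fun i hi j hj hij => hne i (Finset.mem_cons.mpr <| Or.inr hi) j
              (Finset.mem_cons.mpr <| Or.inr hj) hij)
            (fun i hi => hd i (Finset.mem_cons.mpr <| Or.inr hi)))

lemma telescope_summable (σ : RatFunc F ≃ₐ[F] RatFunc F) (h : RatFunc F) (n : ℕ) :
    ∃ g : RatFunc F, (σ ^ n) h - h = σ g - g := by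
  refine ⟨∑ i ∈ Finset.range n, (σ ^ i) h, ?_⟩
  rw [map_sum, ← Finset.sum_sub_distrib]
  have : ∀ i, σ ((σ ^ i) h) - (σ ^ i) h = (σ ^ (i+1)) h - (σ ^ i) h := by
    intro i; rw [pow_succ', AlgEquiv.mul_apply]
  simp only [this]
  rw [Finset.sum_range_sub (fun i => (σ ^ i) h)]
  simp

lemma not_summable_simple (σ : RatFunc F ≃ₐ[F] RatFunc F) (hσ : σ RatFunc.X = RatFunc.X + 1)
    (b : Polynomial F) (hbirr : Irreducible b) (hbmon : b.Monic)
    (r : Polynomial F) (hr0 : r ≠ 0) (hrd : r.degree < b.degree)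
    (g : RatFunc F) (hEq : A r / A b = σ g - g) : False := by
  have hb0 : b ≠ 0 := hbmon.ne_zero
  have hbd : 0 < b.natDegree := hbirr.natDegree_pos
  set v := g.denom with hv
  set n := 2 * v.natDegree + 1 with hn
  set P : ℕ → Polynomial F := fun i => taylor (i : F) b with hP
  set R : ℕ → Polynomial F := fun i => taylor (i : F) r with hR
  have hPmon : ∀ i, (P i).Monic := fun i => by
    simpa [hP, taylor_apply] using hbmon.comp_X_add_C (i : F)
  have hPirr : ∀ i, Irreducible (P i) := fun i => taylor_irreducible b hbirr _
  have hPne : ∀ i j : ℕ, i ≠ j → P i ≠ P j := by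
    intro i j hij h
    have h2 : taylor ((i:F) - j) b = b := by
      have h3 := congrArg (⇑(taylor (-(j:F)))) h
      simp only [hP] at h3
      rwa [taylor_taylor, taylor_taylor, show -(j:F) + j = 0 by ring, taylor_zero,
        show -(j:F) + i = (i:F) - j by ring] at h3
    exact taylor_ne_self b hbmon hbd _ (sub_ne_zero.mpr (by exact_mod_cast hij)) h2
  have hR0 : ∀ i, R i ≠ 0 := by
    intro i h
    apply hr0
    simp only [hR] at h
    rw [taylor_apply] at h
    exact comp_X_add_C_eq_zero_iff.mp h
  have hPndvd : ∀ i, ¬ P i ∣ R i := by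
    intro i hdvd
    have h1 := degree_le_of_dvd hdvd (hR0 i)
    rw [hP, hR] at h1
    simp only [_root_.degree_taylor] at h1
    exact absurd hrd (not_lt.mpr h1)
  have hdenom_i : ∀ i, (A (R i) / A (P i)).denom = P i := fun i =>
    denom_simple (P i) (R i) (hPirr i) (hPmon i) (hPndvd i)
  have hsum : ∀ m : ℕ, (σ ^ m) g - g = ∑ i ∈ Finset.range m, A (R i) / A (P i) := by
    intro m
    have e1 : ∑ i ∈ Finset.range m, ((σ ^ (i+1)) g - (σ ^ i) g) = (σ ^ m) g - g := by
      rw [Finset.sum_range_sub (fun i => (σ ^ i) g)]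
      simp
    rw [← e1]
    apply Finset.sum_congr rfl
    intro i _
    have h5 : (σ ^ (i+1)) g - (σ ^ i) g = (σ ^ i) (σ g - g) := by
      rw [map_sub, pow_succ, AlgEquiv.mul_apply]
    rw [h5, ← hEq, map_div₀, sigma_pow_algebraMap σ hσ, sigma_pow_algebraMap σ hσ]
  set q := (σ ^ n) g - g with hq
  have hvne : v ≠ 0 := g.denom_ne_zero
  have htv : taylor (n:F) v ≠ 0 := by
    intro h
    rw [taylor_apply] at h
    exact hvne (comp_X_add_C_eq_zero_iff.mp h)
  have hqform : q = A (taylor (n:F) g.num * v - taylor (n:F) v * g.num)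
      / A (taylor (n:F) v * v) := by
    conv_lhs => rw [hq, ← g.num_div_denom]
    rw [map_div₀, sigma_pow_algebraMap σ hσ, sigma_pow_algebraMap σ hσ,
        div_sub_div _ _ (RatFunc.algebraMap_ne_zero htv) (RatFunc.algebraMap_ne_zero hvne),
        ← map_mul, ← map_mul, ← map_sub, ← map_mul]
  have hqdvd : q.denom ∣ taylor (n:F) v * v :=
    (RatFunc.denom_dvd (mul_ne_zero htv hvne)).mpr ⟨_, hqform⟩
  have hPdvd : ∀ j ∈ Finset.range n, P j ∣ q.denom := by
    intro j hj
    set s := ∑ i ∈ (Finset.range n).erase j, A (R i) / A (P i) with hs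
    have hsplit : q = A (R j)/A (P j) + s := by
      rw [hq, hsum n]
      exact (Finset.add_sum_erase _ _ hj).symm
    have hsd : s.denom ∣ ∏ i ∈ (Finset.range n).erase j, P i := by
      refine (denom_sum_dvd _ _).trans (dvd_of_eq ?_)
      exact Finset.prod_congr rfl (fun i _ => hdenom_i i)
    have hnotj : ¬ P j ∣ s.denom := by
      intro hdvd
      obtain ⟨i, hi, hdi⟩ := (hPirr j).prime.exists_mem_finset_dvd (hdvd.trans hsd)
      have heq : P j = P i := eq_of_monic_of_associated (hPmon j) (hPmon i)
        ((hPirr j).associated_of_dvd (hPirr i) hdi)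
      exact hPne j i (Ne.symm (Finset.mem_erase.mp hi).1) heq
    have hns : ¬ P j ∣ (-s).denom := by
      intro hdvd
      apply hnotj
      refine hdvd.trans ?_
      refine (RatFunc.denom_dvd (RatFunc.denom_ne_zero s)).mpr ⟨-s.num, ?_⟩
      rw [map_neg, neg_div, s.num_div_denom]
    have hsplit2 : A (R j)/A (P j) = q + (-s) := by rw [hsplit]; ring
    have hd2 : (A (R j)/A (P j)).denom ∣ q.denom * (-s).denom := by
      rw [hsplit2]; exact RatFunc.denom_add_dvd q (-s)
    rw [hdenom_i j] at hd2
    rcases ((hPirr j).prime.dvd_mul).mp hd2 with h | h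
    · exact h
    · exact absurd h hns
  have hDdvd : (∏ i ∈ Finset.range n, P i) ∣ q.denom :=
    prod_monic_irred_dvd _ P (fun i _ => hPmon i) (fun i _ => hPirr i)
      (fun i _ j _ hij => hPne i j hij) _ hPdvd
  have h1 : (∏ i ∈ Finset.range n, P i).natDegree ≤ q.denom.natDegree :=
    natDegree_le_of_dvd hDdvd q.denom_ne_zero
  have h2 : q.denom.natDegree ≤ (taylor (n:F) v * v).natDegree :=
    natDegree_le_of_dvd hqdvd (mul_ne_zero htv hvne)
  have h3 : (taylor (n:F) v * v).natDegree = 2 * v.natDegree := by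
    rw [natDegree_mul htv hvne, natDegree_taylor]; ring
  have h4 : (∏ i ∈ Finset.range n, P i).natDegree = n * b.natDegree := by
    rw [natDegree_prod _ _ (fun i _ => (hPmon i).ne_zero)]
    simp [hP, natDegree_taylor, Finset.sum_const, mul_comm]
  have h5 : n ≤ n * b.natDegree := Nat.le_mul_of_pos_right n hbd
  omega


open scoped Classical in
/-- Residue criterion for a sum of two simple fractions in the same shift orbit:
with `b` irreducible monic, `k > 0`, `deg a, deg a' < deg b`, the rational function
`f = a/b + a'/σ^k(b)` is `σ`-summable in `F(z)` iff `σ^{-k}(a') + a = 0`. -/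
theorem shift_summability_two_fractions (F : Type) [Field F] [CharZero F]
    (σ : RatFunc F ≃ₐ[F] RatFunc F) (hσ : σ RatFunc.X = RatFunc.X + 1)
    (b : Polynomial F) (hbirr : Irreducible b) (hbmon : b.Monic)
    (k : ℕ) (hk : 0 < k)
    (a a' : Polynomial F) (ha : a.degree < b.degree) (ha' : a'.degree < b.degree)
    (f : RatFunc F)
    (hf : f = algebraMap (Polynomial F) (RatFunc F) a /
              algebraMap (Polynomial F) (RatFunc F) b +
          algebraMap (Polynomial F) (RatFunc F) a' /
              (σ ^ (k : ℤ)) (algebraMap (Polynomial F) (RatFunc F) b)) :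
    (∃ g : RatFunc F, f = σ g - g) ↔
      (σ ^ (-(k : ℤ))) (algebraMap (Polynomial F) (RatFunc F) a') +
        algebraMap (Polynomial F) (RatFunc F) a = 0 := by
  set A' : Polynomial F →+* RatFunc F := algebraMap (Polynomial F) (RatFunc F) with hA'
  set a'' : Polynomial F := taylor (-(k:F)) a' with ha''
  have hk1 : taylor (k:F) a'' = a' := by
    rw [ha'', taylor_taylor]
    norm_num
  have hfwd : ∀ p : Polynomial F, (σ ^ (k:ℤ)) (A' p) = A' (taylor (k:F) p) := by
    intro p
    rw [zpow_natCast]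
    exact sigma_pow_algebraMap σ hσ k p
  have hneg : (σ ^ (-(k:ℤ))) (A' a') = A' a'' := by
    apply (σ ^ (k:ℤ)).injective
    rw [hfwd a'', hk1, ← AlgEquiv.mul_apply, ← zpow_add]
    simp
  set h : RatFunc F := A' a'' / A' b with hh
  have hσkh : (σ ^ k) h = A' a' / A' (taylor (k:F) b) := by
    rw [hh, map_div₀, sigma_pow_algebraMap σ hσ, sigma_pow_algebraMap σ hσ, hk1]
  have hf2 : f = A' a / A' b + (σ ^ k) h := by
    rw [hf, hfwd b, hσkh]
  obtain ⟨g₀, hg₀⟩ := telescope_summable σ h k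
  have hf3 : f = A' (a + a'') / A' b + (σ g₀ - g₀) := by
    rw [hf2, ← hg₀, map_add, add_div, hh]
    ring
  constructor
  · rintro ⟨g, hg⟩
    rw [hneg, ← map_add, map_eq_zero_iff A' (RatFunc.algebraMap_injective F)]
    by_contra hne
    have hsum0 : A' (a + a'') / A' b = σ (g - g₀) - (g - g₀) := by
      have h9 : A' (a + a'') / A' b = (σ g - g) - (σ g₀ - g₀) := by
        rw [← hg, hf3]; ring
      rw [h9, map_sub]; ring
    have hdeg : (a + a'').degree < b.degree :=
      (degree_add_le a a'').trans_lt (max_lt ha (by rw [ha'', _root_.degree_taylor]; exact ha'))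
    exact not_summable_simple σ hσ b hbirr hbmon (a + a'')
      (fun h0 => hne (by rw [add_comm] at h0; rw [h0])) hdeg (g - g₀) hsum0
  · intro hres
    have h0 : a + a'' = 0 := by
      rw [hneg, ← map_add, map_eq_zero_iff A' (RatFunc.algebraMap_injective F)] at hres
      rw [add_comm]
      exact hres
    exact ⟨g₀, by rw [hf3, h0]; simp⟩
end
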